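/- arXiv:2406.13486 — 2 statements merged into one kernel-verified Lean document; each statement's English description precedes it below -/
import Mathlib

section
/- Let x_1, x_2, … be a sequence in 𝓜 whose empirical distributions P_n converge weakly to a limiting distribution P_∞ whose covariance matrix Σ^{P_∞} is positive definite. Fix α > 0 and let (b_n^α) be the strategy with b_n^α = (1/m,…,1/m) for n ≤ h and b_n^α ∈ B(α, P_{n−1}) for n > h. Then the empirical Sharpe ratio converges: lim_{n→∞} Sh_n(b_n^α) = E^{P_∞}(⟨b^α, X⟩) / sqrt( Var^{P_∞}(⟨b^α, X⟩) ), where b^α is the unique element of B(α, P_∞). -/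
open MeasureTheory Filter Topology Finset

noncomputable section

/-- The ambient Euclidean space of asset-return vectors. -/
abbrev Em (m : ℕ) := EuclideanSpace ℝ (Fin m)

/-- The market set `𝓜 = {β ∈ ℝ^m : β_j > 0 ∀ j, ‖β‖ ≤ M}`. -/
def mkt (m : ℕ) (M : ℝ) : Set (Em m) := {β | (∀ j, 0 < β j) ∧ ‖β‖ ≤ M}

/-- The portfolio simplex `𝓑 = {β ∈ ℝ^m : β_j ≥ 0 ∀ j, Σ_j β_j = 1}`. -/
def splx (m : ℕ) : Set (Em m) := {β | (∀ j, 0 ≤ β j) ∧ ∑ j, β j = 1}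

/-- Mean vector `μ^Q` of a distribution `Q`. -/
def meanVec {m : ℕ} (Q : Measure (Em m)) : Fin m → ℝ := fun j => ∫ x, x j ∂Q

/-- Covariance matrix `Σ^Q` of a distribution `Q`. -/
def covMat {m : ℕ} (Q : Measure (Em m)) : Matrix (Fin m) (Fin m) ℝ :=
  Matrix.of fun i j => ∫ x, (x i - meanVec Q i) * (x j - meanVec Q j) ∂Q

/-- Mean-variance utility `L(α,b,μ^Q,Σ^Q) = ⟨b,μ^Q⟩ - α ⟨b, Σ^Q b⟩`. -/
def mvU {m : ℕ} (α : ℝ) (b : Em m) (Q : Measure (Em m)) : ℝ :=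
  (∑ j, b j * meanVec Q j) - α * ∑ i, ∑ j, b i * covMat Q i j * b j

/-- The set `B(α,Q)` of maximizers of the M-V utility over the simplex. -/
def mvArgmax {m : ℕ} (α : ℝ) (Q : Measure (Em m)) : Set (Em m) :=
  {b ∈ splx m | ∀ b' ∈ splx m, mvU α b' Q ≤ mvU α b Q}


/-- The return `⟨b,x⟩` of a portfolio `b` against a return vector `x`. -/
def ret {m : ℕ} (b x : Em m) : ℝ := ∑ j, b j * x j

/-- Empirical mean of returns `M_n((b_n)) = (1/n) Σ_{i=1}^n ⟨b_i,x_i⟩` of a strategy. -/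
def empMean {m : ℕ} (b x : ℕ → Em m) (n : ℕ) : ℝ :=
  (n : ℝ)⁻¹ * ∑ i ∈ Finset.Icc 1 n, ret (b i) (x i)

/-- Empirical variance of returns `V_n((b_n))` of a strategy. -/
def empVar {m : ℕ} (b x : ℕ → Em m) (n : ℕ) : ℝ :=
  (n : ℝ)⁻¹ * ∑ j ∈ Finset.Icc 1 n, (ret (b j) (x j) - empMean b x n) ^ 2

/-- Empirical growth rate `W_n((b_n)) = (1/n) Σ_{i=1}^n log ⟨b_i,x_i⟩` of a strategy. -/
def empGrowth {m : ℕ} (b x : ℕ → Em m) (n : ℕ) : ℝ :=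
  (n : ℝ)⁻¹ * ∑ i ∈ Finset.Icc 1 n, Real.log (ret (b i) (x i))

/-- Empirical Sharpe ratio (reference return `r = 0`). -/
def empSharpe {m : ℕ} (b x : ℕ → Em m) (n : ℕ) : ℝ :=
  empMean b x n / Real.sqrt (empVar b x n)

open scoped ENNReal

/-- Weak convergence of a sequence of measures: integrals of every bounded continuous
real function converge. -/
def WeakConv {m : ℕ} (Qn : ℕ → Measure (Em m)) (Q : Measure (Em m)) : Prop :=
  ∀ f : BoundedContinuousFunction (Em m) ℝ,
    Tendsto (fun n => ∫ x, f x ∂(Qn n)) atTop (𝓝 (∫ x, f x ∂Q))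

/-- The empirical distribution `P_n = (1/n) Σ_{i=1}^n δ_{x_i}`. -/
def empMeas {m : ℕ} (x : ℕ → Em m) (n : ℕ) : Measure (Em m) :=
  (n : ℝ≥0∞)⁻¹ • ∑ i ∈ Finset.Icc 1 n, Measure.dirac (x i)

/-- Expected return `E^Q(⟨b,X⟩)` of a portfolio under a distribution `Q`. -/
def pMean {m : ℕ} (Q : Measure (Em m)) (b : Em m) : ℝ := ∫ x, ret b x ∂Q

/-- Variance `Var^Q(⟨b,X⟩)` of a portfolio's return under a distribution `Q`. -/
def pVar {m : ℕ} (Q : Measure (Em m)) (b : Em m) : ℝ := ∫ x, (ret b x - pMean Q b) ^ 2 ∂Q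

/-- Expected logarithmic return `E^Q(log ⟨b,X⟩)` of a portfolio under `Q`. -/
def pLog {m : ℕ} (Q : Measure (Em m)) (b : Em m) : ℝ := ∫ x, Real.log (ret b x) ∂Q

namespace SA
variable {m : ℕ}

lemma abs_coord_le_norm (y : Em m) (j : Fin m) : |y j| ≤ ‖y‖ := by
  rw [EuclideanSpace.norm_eq]
  have h1 : |y j| = Real.sqrt (‖y j‖ ^ 2) := by
    rw [Real.sqrt_sq_eq_abs, Real.norm_eq_abs, abs_abs]
  rw [h1]
  exact Real.sqrt_le_sqrt (Finset.single_le_sum (f := fun i => ‖y i‖ ^ 2) (fun i _ => sq_nonneg _) (Finset.mem_univ j))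

lemma ret_eq_inner (b y : Em m) : ret b y = inner ℝ b y := by
  rw [PiLp.inner_apply]; simp [ret, RCLike.inner_apply, mul_comm]

lemma abs_ret_le (b y : Em m) : |ret b y| ≤ ‖b‖ * ‖y‖ := by
  rw [ret_eq_inner]; exact abs_real_inner_le_norm _ _

lemma ret_sub (b b' y : Em m) : ret b y - ret b' y = ret (b - b') y := by
  simp [ret, ← Finset.sum_sub_distrib, sub_mul]

lemma continuous_coord (j : Fin m) : Continuous (fun y : Em m => y j) := by fun_prop

lemma continuous_ret (b : Em m) : Continuous (fun y : Em m => ret b y) := by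
  unfold ret; fun_prop

lemma splx_coord_le_one {b : Em m} (hb : b ∈ splx m) (j : Fin m) : b j ≤ 1 := by
  calc b j ≤ ∑ i, b i := Finset.single_le_sum (fun i _ => hb.1 i) (Finset.mem_univ j)
  _ = 1 := hb.2

lemma splx_norm_le_one {b : Em m} (hb : b ∈ splx m) : ‖b‖ ≤ 1 := by
  rw [EuclideanSpace.norm_eq]
  have h : ∑ i, ‖b i‖ ^ 2 ≤ 1 := by
    calc ∑ i, ‖b i‖ ^ 2 ≤ ∑ i, b i := by
          refine Finset.sum_le_sum fun i _ => ?_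
          rw [Real.norm_eq_abs, sq_abs]
          nlinarith [hb.1 i, splx_coord_le_one hb i]
    _ = 1 := hb.2
  calc Real.sqrt (∑ i, ‖b i‖ ^ 2) ≤ Real.sqrt 1 := Real.sqrt_le_sqrt h
  _ = 1 := Real.sqrt_one

lemma isCompact_splx (m : ℕ) : IsCompact (splx m) := by
  have hclosed : IsClosed (splx m) := by
    have : splx m = (⋂ j, {b : Em m | 0 ≤ b j}) ∩ {b : Em m | ∑ j, b j = 1} := by
      ext b; simp [splx, Set.mem_iInter]
    rw [this]
    exact (isClosed_iInter fun j => isClosed_le continuous_const (continuous_coord j)).inter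
      (isClosed_eq (continuous_finset_sum _ fun j _ => continuous_coord j) continuous_const)
  have hbdd : Bornology.IsBounded (splx m) := by
    refine Metric.isBounded_iff_subset_closedBall 0 |>.2 ⟨1, fun b hb => ?_⟩
    rw [Metric.mem_closedBall, dist_zero_right]
    exact splx_norm_le_one hb
  exact Metric.isCompact_of_isClosed_isBounded hclosed hbdd

def clampR (M t : ℝ) : ℝ := max (-M) (min M t)

lemma clampR_eq {M t : ℝ} (h : |t| ≤ M) : clampR M t = t := by
  have h1 := abs_le.1 h
  unfold clampR; rw [min_eq_right h1.2, max_eq_right h1.1]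

lemma abs_clampR (M t : ℝ) : |clampR M t| ≤ |M| := by
  unfold clampR; rw [abs_le]; constructor
  · calc -|M| ≤ -M := neg_le_neg (le_abs_self M)
    _ ≤ max (-M) (min M t) := le_max_left _ _
  · exact max_le (neg_le_abs M) ((min_le_left _ _).trans (le_abs_self M))

lemma continuous_clampR (M : ℝ) : Continuous (clampR M) :=
  continuous_const.max (continuous_const.min continuous_id)

def coordBC (m : ℕ) (M : ℝ) (j : Fin m) : BoundedContinuousFunction (Em m) ℝ :=
  BoundedContinuousFunction.mkOfBound
    ⟨fun y => clampR M (y j), (continuous_clampR M).comp (continuous_coord j)⟩ (2 * |M|)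
    (fun a b => by
      rw [Real.dist_eq]
      calc |clampR M (a j) - clampR M (b j)| ≤ |clampR M (a j)| + |clampR M (b j)| := abs_sub _ _
      _ ≤ 2 * |M| := by have := abs_clampR M (a j); have := abs_clampR M (b j); linarith)

@[simp] lemma coordBC_apply (M : ℝ) (j : Fin m) (y : Em m) : coordBC m M j y = clampR M (y j) := rfl

variable {m : ℕ}

lemma integrable_dirac' {f : Em m → ℝ} (hf : Continuous f) (a : Em m) :
    Integrable f (Measure.dirac a) := by
  refine ⟨hf.aestronglyMeasurable, ?_⟩
  rw [hasFiniteIntegral_iff_norm, MeasureTheory.lintegral_dirac]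
  exact ENNReal.ofReal_lt_top

lemma integral_empMeas (x : ℕ → Em m) {f : Em m → ℝ} (hf : Continuous f) (n : ℕ) :
    ∫ y, f y ∂(empMeas x n) = (n : ℝ)⁻¹ * ∑ i ∈ Finset.Icc 1 n, f (x i) := by
  unfold empMeas
  rw [integral_smul_measure, integral_finset_sum_measure (fun i _ => integrable_dirac' hf (x i))]
  simp [integral_dirac, ENNReal.toReal_inv, smul_eq_mul]

lemma isProb_empMeas (x : ℕ → Em m) {n : ℕ} (hn : 1 ≤ n) :
    IsProbabilityMeasure (empMeas x n) := by
  constructor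
  unfold empMeas
  rw [Measure.smul_apply, Measure.finset_sum_apply]
  simp only [measure_univ, Finset.sum_const, Nat.card_Icc, Nat.add_sub_cancel, nsmul_eq_mul, mul_one]
  rw [smul_eq_mul, ENNReal.inv_mul_cancel (by exact_mod_cast Nat.one_le_iff_ne_zero.1 hn) (ENNReal.natCast_ne_top n)]

lemma empMeas_compl_ball (x : ℕ → Em m) {M : ℝ} (hx : ∀ i, ‖x i‖ ≤ M) (n : ℕ) :
    empMeas x n (Metric.closedBall (0 : Em m) M)ᶜ = 0 := by
  unfold empMeas
  rw [Measure.smul_apply, Measure.finset_sum_apply]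
  rw [Finset.sum_eq_zero, smul_zero]
  intro i _
  rw [Measure.dirac_apply' _ Metric.isClosed_closedBall.measurableSet.compl]
  simp only [Set.indicator_apply_eq_zero, Set.mem_compl_iff, Pi.one_apply]
  intro hmem
  exact absurd (mem_closedBall_zero_iff.2 (hx i)) hmem

lemma ae_eq_on_set {Q : Measure (Em m)} {s : Set (Em m)} (hQ : Q sᶜ = 0) {f g : Em m → ℝ}
    (hfg : ∀ y ∈ s, f y = g y) : f =ᵐ[Q] g := by
  have h1 : ∀ᵐ y ∂Q, y ∈ s := by
    rw [MeasureTheory.ae_iff]; exact hQ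
  filter_upwards [h1] with y hy using hfg y hy

lemma integrable_of_ae_bound {Q : Measure (Em m)} [IsFiniteMeasure Q] {f : Em m → ℝ}
    (hf : Continuous f) {C : ℝ} (hC : ∀ᵐ y ∂Q, |f y| ≤ C) : Integrable f Q :=
  (integrable_const C).mono' hf.aestronglyMeasurable (by simpa [Real.norm_eq_abs] using hC)

lemma tendsto_integral_of_agree {M : ℝ} {x : ℕ → Em m} {Plim : Measure (Em m)}
    (hx : ∀ i, ‖x i‖ ≤ M) (hP : Plim (Metric.closedBall (0 : Em m) M)ᶜ = 0)
    (hconv : WeakConv (empMeas x) Plim)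
    (g : BoundedContinuousFunction (Em m) ℝ) (f : Em m → ℝ)
    (hfg : ∀ y ∈ Metric.closedBall (0 : Em m) M, f y = g y) :
    Tendsto (fun n => ∫ y, f y ∂(empMeas x n)) atTop (𝓝 (∫ y, f y ∂Plim)) := by
  have h1 : ∀ n, ∫ y, f y ∂(empMeas x n) = ∫ y, g y ∂(empMeas x n) := fun n =>
    integral_congr_ae (ae_eq_on_set (empMeas_compl_ball x hx n) hfg)
  have h2 : ∫ y, f y ∂Plim = ∫ y, g y ∂Plim :=
    integral_congr_ae (ae_eq_on_set hP hfg)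
  simp_rw [h1, h2]
  exact hconv g

variable {m : ℕ}

lemma ae_mem_ball {Q : Measure (Em m)} {M : ℝ}
    (hQ : Q (Metric.closedBall (0 : Em m) M)ᶜ = 0) :
    ∀ᵐ y ∂Q, ‖y‖ ≤ M := by
  have h1 : ∀ᵐ y ∂Q, y ∈ Metric.closedBall (0 : Em m) M := by
    rw [MeasureTheory.ae_iff]
    have : {a : Em m | ¬ a ∈ Metric.closedBall (0 : Em m) M} = (Metric.closedBall (0 : Em m) M)ᶜ := rfl
    rw [this]; exact hQ
  filter_upwards [h1] with y hy using mem_closedBall_zero_iff.1 hy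

lemma tendsto_meanVec_emp {M : ℝ} {x : ℕ → Em m} {Plim : Measure (Em m)}
    (hx : ∀ i, ‖x i‖ ≤ M) (hP : Plim (Metric.closedBall (0 : Em m) M)ᶜ = 0)
    (hconv : WeakConv (empMeas x) Plim) (j : Fin m) :
    Tendsto (fun n => meanVec (empMeas x n) j) atTop (𝓝 (meanVec Plim j)) := by
  refine tendsto_integral_of_agree hx hP hconv (coordBC m M j) _ fun y hy => ?_
  rw [coordBC_apply, clampR_eq ((abs_coord_le_norm y j).trans (mem_closedBall_zero_iff.1 hy))]

lemma tendsto_second_emp {M : ℝ} {x : ℕ → Em m} {Plim : Measure (Em m)}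
    (hx : ∀ i, ‖x i‖ ≤ M) (hP : Plim (Metric.closedBall (0 : Em m) M)ᶜ = 0)
    (hconv : WeakConv (empMeas x) Plim) (i j : Fin m) :
    Tendsto (fun n => ∫ y, y i * y j ∂(empMeas x n)) atTop (𝓝 (∫ y, y i * y j ∂Plim)) := by
  refine tendsto_integral_of_agree hx hP hconv (coordBC m M i * coordBC m M j) _ fun y hy => ?_
  have hnorm := mem_closedBall_zero_iff.1 hy
  rw [BoundedContinuousFunction.coe_mul]
  simp only [Pi.mul_apply, coordBC_apply]
  rw [clampR_eq ((abs_coord_le_norm y i).trans hnorm), clampR_eq ((abs_coord_le_norm y j).trans hnorm)]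

lemma covMat_decomp {Q : Measure (Em m)} [IsProbabilityMeasure Q] {M : ℝ}
    (hQ : Q (Metric.closedBall (0 : Em m) M)ᶜ = 0) (i j : Fin m) :
    covMat Q i j = (∫ y, y i * y j ∂Q) - meanVec Q i * meanVec Q j := by
  have hae := ae_mem_ball hQ
  have hbd : ∀ k : Fin m, ∀ᵐ y ∂Q, |y k| ≤ M := fun k => by
    filter_upwards [hae] with y hy using (abs_coord_le_norm y k).trans hy
  have hint : ∀ k : Fin m, Integrable (fun y : Em m => y k) Q := fun k =>
    integrable_of_ae_bound (continuous_coord k) (hbd k)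
  have hintij : Integrable (fun y : Em m => y i * y j) Q := by
    refine integrable_of_ae_bound ((continuous_coord i).mul (continuous_coord j)) (C := M * M) ?_
    filter_upwards [hbd i, hbd j] with y h1 h2
    rw [abs_mul]
    exact mul_le_mul h1 h2 (abs_nonneg _) ((abs_nonneg _).trans h1)
  set a := meanVec Q i with ha
  set c := meanVec Q j with hc
  have key : (fun y : Em m => (y i - a) * (y j - c))
      = fun y => y i * y j - (c * y i + (a * y j - a * c)) := by
    funext y; ring
  have h1 : covMat Q i j = ∫ y, (y i * y j - (c * y i + (a * y j - a * c))) ∂Q := by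
    show (∫ y, (y i - a) * (y j - c) ∂Q) = _
    rw [key]
  have hgi : Integrable (fun y : Em m => c * y i) Q := (hint i).const_mul c
  have hgj : Integrable (fun y : Em m => a * y j) Q := (hint j).const_mul a
  have hgjc : Integrable (fun y : Em m => a * y j - a * c) Q := hgj.sub (integrable_const _)
  have hg : Integrable (fun y : Em m => c * y i + (a * y j - a * c)) Q := hgi.add hgjc
  rw [h1, integral_sub hintij hg, integral_add hgi hgjc, integral_sub hgj (integrable_const _),
    integral_const_mul, integral_const_mul, integral_const]
  simp only [probReal_univ, measure_univ, ENNReal.toReal_one, one_smul]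
  rw [show (∫ y, y i ∂Q) = a from rfl, show (∫ y, y j ∂Q) = c from rfl]
  ring

variable {m : ℕ}

lemma tendsto_covMat_emp {M : ℝ} {x : ℕ → Em m} {Plim : Measure (Em m)}
    [IsProbabilityMeasure Plim]
    (hx : ∀ i, ‖x i‖ ≤ M) (hP : Plim (Metric.closedBall (0 : Em m) M)ᶜ = 0)
    (hconv : WeakConv (empMeas x) Plim) (i j : Fin m) :
    Tendsto (fun n => covMat (empMeas x n) i j) atTop (𝓝 (covMat Plim i j)) := by
  have h1 : Tendsto (fun n => (∫ y, y i * y j ∂(empMeas x n))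
      - meanVec (empMeas x n) i * meanVec (empMeas x n) j) atTop (𝓝 (covMat Plim i j)) := by
    rw [covMat_decomp hP i j]
    exact (tendsto_second_emp hx hP hconv i j).sub
      ((tendsto_meanVec_emp hx hP hconv i).mul (tendsto_meanVec_emp hx hP hconv j))
  refine h1.congr' ?_
  filter_upwards [eventually_ge_atTop 1] with n hn
  haveI := isProb_empMeas x hn
  exact (covMat_decomp (empMeas_compl_ball x hx n) i j).symm

lemma mvU_diff_le {α : ℝ} (hα : 0 ≤ α) (Q Q' : Measure (Em m)) {b : Em m} (hb : b ∈ splx m) :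
    |mvU α b Q - mvU α b Q'| ≤ (∑ j, |meanVec Q j - meanVec Q' j|)
      + α * ∑ i, ∑ j, |covMat Q i j - covMat Q' i j| := by
  have habs : ∀ j, |b j| ≤ 1 := fun j => by
    rw [abs_of_nonneg (hb.1 j)]; exact splx_coord_le_one hb j
  have hA : (∑ j, b j * meanVec Q j) - (∑ j, b j * meanVec Q' j)
      = ∑ j, b j * (meanVec Q j - meanVec Q' j) := by
    rw [← Finset.sum_sub_distrib]
    exact Finset.sum_congr rfl fun j _ => (mul_sub _ _ _).symm
  have hB : (∑ i, ∑ j, b i * covMat Q i j * b j) - (∑ i, ∑ j, b i * covMat Q' i j * b j)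
      = ∑ i, ∑ j, (b i * b j) * (covMat Q i j - covMat Q' i j) := by
    rw [← Finset.sum_sub_distrib]
    refine Finset.sum_congr rfl fun i _ => ?_
    rw [← Finset.sum_sub_distrib]
    exact Finset.sum_congr rfl fun j _ => by ring
  have h1 : mvU α b Q - mvU α b Q' = (∑ j, b j * (meanVec Q j - meanVec Q' j))
      - α * (∑ i, ∑ j, (b i * b j) * (covMat Q i j - covMat Q' i j)) := by
    simp only [mvU]; rw [← hA, ← hB]; ring
  rw [h1]
  have t1 : |∑ j, b j * (meanVec Q j - meanVec Q' j)| ≤ ∑ j, |meanVec Q j - meanVec Q' j| := by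
    refine (Finset.abs_sum_le_sum_abs _ _).trans (Finset.sum_le_sum fun j _ => ?_)
    rw [abs_mul]
    exact mul_le_of_le_one_left (abs_nonneg _) (habs j)
  have t2 : |∑ i, ∑ j, (b i * b j) * (covMat Q i j - covMat Q' i j)|
      ≤ ∑ i, ∑ j, |covMat Q i j - covMat Q' i j| := by
    refine (Finset.abs_sum_le_sum_abs _ _).trans (Finset.sum_le_sum fun i _ => ?_)
    refine (Finset.abs_sum_le_sum_abs _ _).trans (Finset.sum_le_sum fun j _ => ?_)
    rw [abs_mul, abs_mul]
    exact mul_le_of_le_one_left (abs_nonneg _)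
      (mul_le_one₀ (habs i) (abs_nonneg _) (habs j))
  calc |(∑ j, b j * (meanVec Q j - meanVec Q' j))
      - α * (∑ i, ∑ j, (b i * b j) * (covMat Q i j - covMat Q' i j))|
      ≤ |∑ j, b j * (meanVec Q j - meanVec Q' j)|
        + |α * (∑ i, ∑ j, (b i * b j) * (covMat Q i j - covMat Q' i j))| := by
        rw [sub_eq_add_neg]; exact (abs_add_le _ _).trans (by rw [abs_neg])
  _ ≤ (∑ j, |meanVec Q j - meanVec Q' j|) + α * ∑ i, ∑ j, |covMat Q i j - covMat Q' i j| := by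
        refine add_le_add t1 ?_
        rw [abs_mul, abs_of_nonneg hα]
        exact mul_le_mul_of_nonneg_left t2 hα

lemma tendsto_argmax {K : Set (Em m)} (hK : IsCompact K) {u : Em m → ℝ} (hu : Continuous u)
    {un : ℕ → Em m → ℝ} {ε : ℕ → ℝ} (hε : Tendsto ε atTop (𝓝 0))
    (hbound : ∀ᶠ n in atTop, ∀ c ∈ K, |un n c - u c| ≤ ε n)
    {bn : ℕ → Em m} (hbn : ∀ᶠ n in atTop, bn n ∈ K ∧ ∀ c ∈ K, un n c ≤ un n (bn n))
    {b0 : Em m} (hb0K : b0 ∈ K) (hmax : ∀ c ∈ K, u c ≤ u b0)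
    (huniq : ∀ c ∈ K, (∀ c' ∈ K, u c' ≤ u c) → c = b0) :
    Tendsto bn atTop (𝓝 b0) := by
  rw [Metric.tendsto_atTop]
  intro r hr
  by_cases hS : (K ∩ {c | r ≤ dist c b0}).Nonempty
  · have hSc : IsCompact (K ∩ {c | r ≤ dist c b0}) :=
      hK.inter_right (isClosed_le continuous_const ((continuous_id.dist continuous_const)))
    obtain ⟨c, hcS, hcmax⟩ := hSc.exists_isMaxOn hS hu.continuousOn
    have hlt : u c < u b0 := by
      rcases lt_or_eq_of_le (hmax c hcS.1) with hlt | heq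
      · exact hlt
      · exfalso
        have hceq : c = b0 := huniq c hcS.1 fun c' hc' => (hmax c' hc').trans heq.ge
        have := hcS.2
        rw [hceq] at this
        simp only [Set.mem_setOf_eq, dist_self] at this
        linarith
    set δ := u b0 - u c with hδdef
    have hδ : 0 < δ := by simp only [hδdef]; linarith
    have hev : ∀ᶠ n in atTop, ε n < δ / 2 := hε.eventually_lt_const (by linarith)
    obtain ⟨N, hN⟩ := eventually_atTop.mp ((hev.and hbound).and hbn)
    refine ⟨N, fun n hn => ?_⟩
    obtain ⟨⟨h1, h2⟩, h3, h4⟩ := hN n hn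
    by_contra hge
    push_neg at hge
    have hmem : bn n ∈ K ∩ {c | r ≤ dist c b0} := ⟨h3, hge⟩
    have hle1 : u (bn n) ≤ u c := hcmax hmem
    have e1 := abs_le.1 (h2 (bn n) h3)
    have e2 := abs_le.1 (h2 b0 hb0K)
    have e3 := h4 b0 hb0K
    simp only [hδdef] at hle1 e1 e2 e3 h1 ⊢
    linarith
  · obtain ⟨N, hN⟩ := eventually_atTop.mp hbn
    refine ⟨N, fun n hn => ?_⟩
    by_contra hge
    push_neg at hge
    exact hS ⟨bn n, (hN n hn).1, hge⟩

lemma cesaro_Icc {u : ℕ → ℝ} {l : ℝ} (hu : Tendsto u atTop (𝓝 l)) :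
    Tendsto (fun n : ℕ => (n : ℝ)⁻¹ * ∑ i ∈ Finset.Icc 1 n, u i) atTop (𝓝 l) := by
  have h1 : ∀ n : ℕ, ∑ i ∈ Finset.Icc 1 n, u i = ∑ i ∈ Finset.range n, u (1 + i) := by
    intro n
    rw [← Finset.Ico_add_one_right_eq_Icc, Finset.sum_Ico_eq_sum_range]
    simp
  simp only [h1]
  have h2 : Tendsto (fun i : ℕ => u (1 + i)) atTop (𝓝 l) :=
    hu.comp (tendsto_atTop_mono (fun n => Nat.le_add_left n 1) tendsto_id)
  exact h2.cesaro

variable {m : ℕ}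

def retBC (m : ℕ) (M : ℝ) (b : Em m) : BoundedContinuousFunction (Em m) ℝ :=
  ∑ j, b j • coordBC m M j

lemma retBC_agree (M : ℝ) (b : Em m) {y : Em m} (hy : y ∈ Metric.closedBall (0 : Em m) M) :
    retBC m M b y = ret b y := by
  have hnorm := mem_closedBall_zero_iff.1 hy
  unfold retBC ret
  rw [BoundedContinuousFunction.coe_sum, Finset.sum_apply]
  refine Finset.sum_congr rfl fun j _ => ?_
  rw [BoundedContinuousFunction.coe_smul]
  simp only [Pi.smul_apply, coordBC_apply, smul_eq_mul]
  rw [clampR_eq ((abs_coord_le_norm y j).trans hnorm)]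

lemma tendsto_ret_emp {M : ℝ} {x : ℕ → Em m} {Plim : Measure (Em m)}
    (hx : ∀ i, ‖x i‖ ≤ M) (hP : Plim (Metric.closedBall (0 : Em m) M)ᶜ = 0)
    (hconv : WeakConv (empMeas x) Plim) (b : Em m) :
    Tendsto (fun n => ∫ y, ret b y ∂(empMeas x n)) atTop (𝓝 (∫ y, ret b y ∂Plim)) :=
  tendsto_integral_of_agree hx hP hconv (retBC m M b) _ fun y hy => (retBC_agree M b hy).symm

lemma tendsto_retsq_emp {M : ℝ} {x : ℕ → Em m} {Plim : Measure (Em m)}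
    (hx : ∀ i, ‖x i‖ ≤ M) (hP : Plim (Metric.closedBall (0 : Em m) M)ᶜ = 0)
    (hconv : WeakConv (empMeas x) Plim) (b : Em m) :
    Tendsto (fun n => ∫ y, (ret b y) ^ 2 ∂(empMeas x n)) atTop (𝓝 (∫ y, (ret b y) ^ 2 ∂Plim)) := by
  refine tendsto_integral_of_agree hx hP hconv (retBC m M b * retBC m M b) _ fun y hy => ?_
  rw [BoundedContinuousFunction.coe_mul]
  simp only [Pi.mul_apply]
  rw [retBC_agree M b hy, sq]

lemma pMean_eq {Q : Measure (Em m)} [IsProbabilityMeasure Q] {M : ℝ}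
    (hQ : Q (Metric.closedBall (0 : Em m) M)ᶜ = 0) (b : Em m) :
    pMean Q b = ∑ j, b j * meanVec Q j := by
  have hbd : ∀ k : Fin m, ∀ᵐ y ∂Q, |y k| ≤ M := fun k => by
    filter_upwards [ae_mem_ball hQ] with y hy using (abs_coord_le_norm y k).trans hy
  have hint : ∀ k : Fin m, Integrable (fun y : Em m => y k) Q := fun k =>
    integrable_of_ae_bound (continuous_coord k) (hbd k)
  unfold pMean ret
  rw [integral_finset_sum _ (fun j _ => (hint j).const_mul (b j))]
  exact Finset.sum_congr rfl fun j _ => integral_const_mul _ _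

lemma integrable_ret {Q : Measure (Em m)} [IsProbabilityMeasure Q] {M : ℝ}
    (hQ : Q (Metric.closedBall (0 : Em m) M)ᶜ = 0) {b : Em m} (hb : ‖b‖ ≤ 1) :
    Integrable (fun y : Em m => ret b y) Q := by
  refine integrable_of_ae_bound (continuous_ret b) (C := M) ?_
  filter_upwards [ae_mem_ball hQ] with y hy
  calc |ret b y| ≤ ‖b‖ * ‖y‖ := abs_ret_le b y
  _ ≤ 1 * M := mul_le_mul hb hy (norm_nonneg _) zero_le_one
  _ = M := one_mul M

lemma integrable_retsq {Q : Measure (Em m)} [IsProbabilityMeasure Q] {M : ℝ}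
    (hQ : Q (Metric.closedBall (0 : Em m) M)ᶜ = 0) {b : Em m} (hb : ‖b‖ ≤ 1) :
    Integrable (fun y : Em m => (ret b y) ^ 2) Q := by
  refine integrable_of_ae_bound ((continuous_ret b).pow 2) (C := M * M) ?_
  filter_upwards [ae_mem_ball hQ] with y hy
  have h1 : |ret b y| ≤ M := by
    calc |ret b y| ≤ ‖b‖ * ‖y‖ := abs_ret_le b y
    _ ≤ 1 * M := mul_le_mul hb hy (norm_nonneg _) zero_le_one
    _ = M := one_mul M
  calc |(ret b y) ^ 2| = |ret b y| * |ret b y| := by rw [sq, abs_mul]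
  _ ≤ M * M := mul_le_mul h1 h1 (abs_nonneg _) ((abs_nonneg _).trans h1)

lemma pVar_eq {Q : Measure (Em m)} [IsProbabilityMeasure Q] {M : ℝ}
    (hQ : Q (Metric.closedBall (0 : Em m) M)ᶜ = 0) {b : Em m} (hb : ‖b‖ ≤ 1) :
    pVar Q b = (∫ y, (ret b y) ^ 2 ∂Q) - (pMean Q b) ^ 2 := by
  have hint1 := integrable_ret hQ hb
  have hint2 := integrable_retsq hQ hb
  set c := pMean Q b with hc
  have key : (fun y : Em m => (ret b y - c) ^ 2)
      = fun y => (ret b y) ^ 2 - ((2 * c) * ret b y - c ^ 2) := by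
    funext y; ring
  have hg1 : Integrable (fun y : Em m => (2 * c) * ret b y) Q := hint1.const_mul _
  have hg : Integrable (fun y : Em m => (2 * c) * ret b y - c ^ 2) Q :=
    hg1.sub (integrable_const _)
  unfold pVar
  rw [show (fun y : Em m => (ret b y - pMean Q b) ^ 2) = fun y : Em m => (ret b y - c) ^ 2 from rfl]
  rw [key, integral_sub hint2 hg, integral_sub hg1 (integrable_const _), integral_const_mul,
    integral_const]
  simp only [probReal_univ, measure_univ, ENNReal.toReal_one, one_smul]
  rw [show (∫ y, ret b y ∂Q) = c from rfl]
  ring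

lemma pVar_quadform {Q : Measure (Em m)} [IsProbabilityMeasure Q] {M : ℝ}
    (hQ : Q (Metric.closedBall (0 : Em m) M)ᶜ = 0) {b : Em m} (hb : b ∈ splx m) :
    pVar Q b = ∑ i, ∑ j, b i * covMat Q i j * b j := by
  have hbd : ∀ k : Fin m, ∀ᵐ y ∂Q, |y k| ≤ M := fun k => by
    filter_upwards [ae_mem_ball hQ] with y hy using (abs_coord_le_norm y k).trans hy
  have hintc : ∀ i j : Fin m,
      Integrable (fun y : Em m => (b i * b j) * ((y i - meanVec Q i) * (y j - meanVec Q j))) Q := by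
    intro i j
    have hcont : Continuous (fun y : Em m =>
        (b i * b j) * ((y i - meanVec Q i) * (y j - meanVec Q j))) := by
      have := continuous_coord (m := m) i
      have := continuous_coord (m := m) j
      fun_prop
    refine integrable_of_ae_bound hcont
      (C := |b i * b j| * ((M + |meanVec Q i|) * (M + |meanVec Q j|))) ?_
    filter_upwards [hbd i, hbd j] with y h1 h2
    rw [abs_mul]
    refine mul_le_mul_of_nonneg_left ?_ (abs_nonneg _)
    rw [abs_mul]
    have e1 : |y i - meanVec Q i| ≤ M + |meanVec Q i| :=
      (abs_sub _ _).trans (by linarith)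
    have e2 : |y j - meanVec Q j| ≤ M + |meanVec Q j| :=
      (abs_sub _ _).trans (by linarith)
    exact mul_le_mul e1 e2 (abs_nonneg _) ((abs_nonneg _).trans e1)
  have hcenter : (fun y : Em m => (ret b y - pMean Q b) ^ 2)
      = fun y => ∑ i, ∑ j, (b i * b j) * ((y i - meanVec Q i) * (y j - meanVec Q j)) := by
    funext y
    have hr : ret b y - pMean Q b = ∑ j, b j * (y j - meanVec Q j) := by
      rw [pMean_eq hQ b]
      unfold ret
      rw [← Finset.sum_sub_distrib]
      exact Finset.sum_congr rfl fun j _ => by ring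
    rw [hr, sq, Finset.sum_mul_sum]
    exact Finset.sum_congr rfl fun i _ => Finset.sum_congr rfl fun j _ => by ring
  unfold pVar
  rw [hcenter, integral_finset_sum _ (fun i _ => integrable_finset_sum _ (fun j _ => hintc i j))]
  refine Finset.sum_congr rfl fun i _ => ?_
  rw [integral_finset_sum _ (fun j _ => hintc i j)]
  refine Finset.sum_congr rfl fun j _ => ?_
  rw [integral_const_mul]
  show (b i * b j) * covMat Q i j = _
  ring

variable {m : ℕ}

lemma continuous_mvU (α : ℝ) (Q : Measure (Em m)) : Continuous (fun c : Em m => mvU α c Q) := by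
  unfold mvU
  refine Continuous.sub ?_ (continuous_const.mul ?_)
  · exact continuous_finset_sum _ fun j _ => (continuous_coord j).mul continuous_const
  · exact continuous_finset_sum _ fun i _ => continuous_finset_sum _ fun j _ =>
      ((continuous_coord i).mul continuous_const).mul (continuous_coord j)

lemma empVar_identity {b x : ℕ → Em m} {n : ℕ} (hn : 1 ≤ n) :
    empVar b x n = ((n : ℝ)⁻¹ * ∑ i ∈ Finset.Icc 1 n, (ret (b i) (x i)) ^ 2)
      - (empMean b x n) ^ 2 := by
  have hn0 : (n : ℝ) ≠ 0 := Nat.cast_ne_zero.2 (Nat.one_le_iff_ne_zero.1 hn)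
  unfold empVar
  set μ := empMean b x n with hμ
  have hexp : ∀ i ∈ Finset.Icc 1 n, (ret (b i) (x i) - μ) ^ 2
      = ((ret (b i) (x i)) ^ 2 - 2 * μ * ret (b i) (x i)) + μ ^ 2 := fun i _ => by ring
  rw [Finset.sum_congr rfl hexp, Finset.sum_add_distrib, Finset.sum_sub_distrib,
    Finset.sum_const, Nat.card_Icc, Nat.add_sub_cancel]
  have hsum2 : ∑ i ∈ Finset.Icc 1 n, 2 * μ * ret (b i) (x i)
      = 2 * μ * ∑ i ∈ Finset.Icc 1 n, ret (b i) (x i) := by rw [Finset.mul_sum]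
  have hμeq : ∑ i ∈ Finset.Icc 1 n, ret (b i) (x i) = n * μ := by
    rw [hμ]; unfold empMean; field_simp
  rw [hsum2, hμeq, nsmul_eq_mul]
  field_simp
  ring


end SA

open SA in
/-- Under the assumptions of Statement 6, the empirical Sharpe ratio of the
online M-V strategy converges to the Sharpe ratio of the unique `b^α ∈ B(α,P_∞)` under the
limiting distribution. -/
theorem empSharpe_tendsto_limit_sharpe
    (m : ℕ) (hm : 2 ≤ m) (M : ℝ) (hM : 0 < M)
    (x : ℕ → Em m) (hx : ∀ n, x n ∈ mkt m M)
    (Plim : Measure (Em m)) [IsProbabilityMeasure Plim] (hPsupp : Plim (mkt m M)ᶜ = 0)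
    (hconv : WeakConv (empMeas x) Plim) (hPD : (covMat Plim).PosDef)
    (α : ℝ) (hα : 0 < α) (h : ℕ) (hh : 0 < h)
    (b : ℕ → Em m)
    (hb1 : ∀ n ≤ h, ∀ j, b n j = (m : ℝ)⁻¹)
    (hb2 : ∀ n > h, b n ∈ mvArgmax α (empMeas x (n - 1)))
    (bα : Em m) (hbα : mvArgmax α Plim = {bα}) :
    Tendsto (fun n => empSharpe b x n) atTop
      (𝓝 (pMean Plim bα / Real.sqrt (pVar Plim bα))) := by
  have hxB : ∀ i, ‖x i‖ ≤ M := fun i => (hx i).2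
  have hPB : Plim (Metric.closedBall (0 : Em m) M)ᶜ = 0 := by
    refine measure_mono_null ?_ hPsupp
    exact Set.compl_subset_compl.2 fun y hy => mem_closedBall_zero_iff.2 hy.2
  -- bα facts
  have hbαmem : bα ∈ mvArgmax α Plim := by rw [hbα]; exact Set.mem_singleton _
  obtain ⟨hbαs, hbαmax⟩ := hbαmem
  have hbαn : ‖bα‖ ≤ 1 := splx_norm_le_one hbαs
  -- strategy stays in the simplex
  have hm0 : (m : ℝ) ≠ 0 := Nat.cast_ne_zero.2 (by omega)
  have hbs : ∀ n, b n ∈ splx m := by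
    intro n
    rcases le_or_gt n h with hle | hgt
    · constructor
      · intro j; rw [hb1 n hle j]; positivity
      · rw [Finset.sum_congr rfl fun j _ => hb1 n hle j, Finset.sum_const, Finset.card_univ,
          Fintype.card_fin, nsmul_eq_mul, mul_inv_cancel₀ hm0]
    · exact (hb2 n hgt).1
  -- convergence of the strategy to bα
  have hbconv : Tendsto b atTop (𝓝 bα) := by
    set ε : ℕ → ℝ := fun n => (∑ j, |meanVec (empMeas x (n - 1)) j - meanVec Plim j|)
      + α * ∑ i, ∑ j, |covMat (empMeas x (n - 1)) i j - covMat Plim i j| with hεdef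
    have hsub : Tendsto (fun n : ℕ => n - 1) atTop atTop := tendsto_sub_atTop_nat 1
    have hε : Tendsto ε atTop (𝓝 0) := by
      have h0 : (0 : ℝ) = (∑ _j : Fin m, (0 : ℝ))
          + α * ∑ _i : Fin m, ∑ _j : Fin m, (0 : ℝ) := by simp
      rw [hεdef, h0]
      refine Tendsto.add ?_ (Tendsto.const_mul α ?_)
      · refine tendsto_finset_sum _ fun j _ => ?_
        have h1 := (tendsto_meanVec_emp hxB hPB hconv j).comp hsub
        have h2 := (h1.sub (tendsto_const_nhds (x := meanVec Plim j))).abs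
        simpa [Function.comp] using h2
      · refine tendsto_finset_sum _ fun i _ => tendsto_finset_sum _ fun j _ => ?_
        have h1 := (tendsto_covMat_emp hxB hPB hconv i j).comp hsub
        have h2 := (h1.sub (tendsto_const_nhds (x := covMat Plim i j))).abs
        simpa [Function.comp] using h2
    refine tendsto_argmax (un := fun n c => mvU α c (empMeas x (n - 1))) (isCompact_splx m) (continuous_mvU α Plim) hε ?_ ?_ hbαs hbαmax ?_
    · refine Eventually.of_forall fun n => fun c hc => ?_
      exact mvU_diff_le hα.le _ _ hc
    · filter_upwards [eventually_gt_atTop h] with n hn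
      exact ⟨(hb2 n hn).1, (hb2 n hn).2⟩
    · intro c hc hcmax
      have : c ∈ mvArgmax α Plim := ⟨hc, hcmax⟩
      rw [hbα] at this
      exact this
  -- returns converge
  have hdist : Tendsto (fun n => dist (b n) bα) atTop (𝓝 0) :=
    tendsto_iff_dist_tendsto_zero.1 hbconv
  have hdiff : Tendsto (fun n => ret (b n) (x n) - ret bα (x n)) atTop (𝓝 0) := by
    refine squeeze_zero_norm (fun n => ?_) (by simpa using hdist.const_mul M)
    rw [Real.norm_eq_abs, ret_sub]
    calc |ret (b n - bα) (x n)| ≤ ‖b n - bα‖ * ‖x n‖ := abs_ret_le _ _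
    _ ≤ ‖b n - bα‖ * M := mul_le_mul_of_nonneg_left (hxB n) (norm_nonneg _)
    _ = M * dist (b n) bα := by rw [dist_eq_norm, mul_comm]
  -- empirical mean converges
  have hMean : Tendsto (fun n => empMean b x n) atTop (𝓝 (pMean Plim bα)) := by
    have hsplit : ∀ n : ℕ, empMean b x n
        = ((n : ℝ)⁻¹ * ∑ i ∈ Finset.Icc 1 n, ret bα (x i))
          + ((n : ℝ)⁻¹ * ∑ i ∈ Finset.Icc 1 n, (ret (b i) (x i) - ret bα (x i))) := by
      intro n
      unfold empMean
      rw [← mul_add, ← Finset.sum_add_distrib]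
      congr 1
      exact Finset.sum_congr rfl fun i _ => by ring
    have hA : Tendsto (fun n : ℕ => (n : ℝ)⁻¹ * ∑ i ∈ Finset.Icc 1 n, ret bα (x i)) atTop
        (𝓝 (pMean Plim bα)) := by
      have heq : ∀ n : ℕ, (n : ℝ)⁻¹ * ∑ i ∈ Finset.Icc 1 n, ret bα (x i)
          = ∫ y, ret bα y ∂(empMeas x n) := fun n =>
        (integral_empMeas x (continuous_ret bα) n).symm
      simp only [heq]
      exact tendsto_ret_emp hxB hPB hconv bα
    have hD := cesaro_Icc hdiff
    have := hA.add hD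
    rw [add_zero] at this
    exact this.congr fun n => (hsplit n).symm
  -- second moment converges
  have hS2 : Tendsto (fun n : ℕ => (n : ℝ)⁻¹ * ∑ i ∈ Finset.Icc 1 n, (ret (b i) (x i)) ^ 2)
      atTop (𝓝 (∫ y, (ret bα y) ^ 2 ∂Plim)) := by
    have habs : ∀ n, |ret (b n) (x n)| ≤ M := fun n => by
      calc |ret (b n) (x n)| ≤ ‖b n‖ * ‖x n‖ := abs_ret_le _ _
      _ ≤ 1 * M := mul_le_mul (splx_norm_le_one (hbs n)) (hxB n) (norm_nonneg _) zero_le_one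
      _ = M := one_mul M
    have habsα : ∀ n, |ret bα (x n)| ≤ M := fun n => by
      calc |ret bα (x n)| ≤ ‖bα‖ * ‖x n‖ := abs_ret_le _ _
      _ ≤ 1 * M := mul_le_mul hbαn (hxB n) (norm_nonneg _) zero_le_one
      _ = M := one_mul M
    have hediff : Tendsto (fun n => (ret (b n) (x n)) ^ 2 - (ret bα (x n)) ^ 2) atTop (𝓝 0) := by
      refine squeeze_zero_norm (fun n => ?_) (by simpa using hdiff.norm.const_mul (2 * M))
      rw [Real.norm_eq_abs]
      have hfac : (ret (b n) (x n)) ^ 2 - (ret bα (x n)) ^ 2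
          = (ret (b n) (x n) - ret bα (x n)) * (ret (b n) (x n) + ret bα (x n)) := by ring
      rw [hfac, abs_mul]
      have h2 : |ret (b n) (x n) + ret bα (x n)| ≤ 2 * M :=
        (abs_add_le _ _).trans (by have := habs n; have := habsα n; linarith)
      calc |ret (b n) (x n) - ret bα (x n)| * |ret (b n) (x n) + ret bα (x n)|
          ≤ |ret (b n) (x n) - ret bα (x n)| * (2 * M) :=
            mul_le_mul_of_nonneg_left h2 (abs_nonneg _)
      _ = 2 * M * ‖ret (b n) (x n) - ret bα (x n)‖ := by rw [Real.norm_eq_abs]; ring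
    have hsplit : ∀ n : ℕ, (n : ℝ)⁻¹ * ∑ i ∈ Finset.Icc 1 n, (ret (b i) (x i)) ^ 2
        = ((n : ℝ)⁻¹ * ∑ i ∈ Finset.Icc 1 n, (ret bα (x i)) ^ 2)
          + ((n : ℝ)⁻¹ * ∑ i ∈ Finset.Icc 1 n, ((ret (b i) (x i)) ^ 2 - (ret bα (x i)) ^ 2)) := by
      intro n
      rw [← mul_add, ← Finset.sum_add_distrib]
      congr 1
      exact Finset.sum_congr rfl fun i _ => by ring
    have hA : Tendsto (fun n : ℕ => (n : ℝ)⁻¹ * ∑ i ∈ Finset.Icc 1 n, (ret bα (x i)) ^ 2) atTop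
        (𝓝 (∫ y, (ret bα y) ^ 2 ∂Plim)) := by
      have heq : ∀ n : ℕ, (n : ℝ)⁻¹ * ∑ i ∈ Finset.Icc 1 n, (ret bα (x i)) ^ 2
          = ∫ y, (ret bα y) ^ 2 ∂(empMeas x n) := fun n =>
        (integral_empMeas x ((continuous_ret bα).pow 2) n).symm
      simp only [heq]
      exact tendsto_retsq_emp hxB hPB hconv bα
    have hD := cesaro_Icc hediff
    have := hA.add hD
    rw [add_zero] at this
    exact this.congr fun n => (hsplit n).symm
  -- variance converges
  have hVarEq : pVar Plim bα = (∫ y, (ret bα y) ^ 2 ∂Plim) - (pMean Plim bα) ^ 2 :=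
    pVar_eq hPB hbαn
  have hVar : Tendsto (fun n => empVar b x n) atTop (𝓝 (pVar Plim bα)) := by
    have h1 : Tendsto (fun n : ℕ => ((n : ℝ)⁻¹ * ∑ i ∈ Finset.Icc 1 n, (ret (b i) (x i)) ^ 2)
        - (empMean b x n) ^ 2) atTop (𝓝 (pVar Plim bα)) := by
      rw [hVarEq]
      have hmsq : Tendsto (fun n => (empMean b x n) ^ 2) atTop (𝓝 ((pMean Plim bα) ^ 2)) := by
        have := hMean.mul hMean
        simpa [sq] using this
      exact hS2.sub hmsq
    refine h1.congr' ?_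
    filter_upwards [eventually_ge_atTop 1] with n hn
    exact (empVar_identity hn).symm
  -- positivity of the limiting variance
  have hVpos : 0 < pVar Plim bα := by
    rw [pVar_quadform hPB hbαs]
    have hbα0 : (fun j => bα j) ≠ (0 : Fin m → ℝ) := by
      intro h0
      have h1 : ∑ j, bα j = 1 := hbαs.2
      rw [Finset.sum_congr rfl fun j _ => congrFun h0 j] at h1
      simp at h1
    have hpos : 0 < dotProduct (fun j => bα j) ((covMat Plim).mulVec (fun j => bα j)) := by
      simpa using hPD.dotProduct_mulVec_pos hbα0
    have heq : dotProduct (fun j => bα j) ((covMat Plim).mulVec (fun j => bα j))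
        = ∑ i, ∑ j, bα i * covMat Plim i j * bα j := by
      simp only [dotProduct, Matrix.mulVec, Finset.mul_sum]
      exact Finset.sum_congr rfl fun i _ => Finset.sum_congr rfl fun j _ => by ring
    rw [← heq]
    exact hpos
  -- conclude
  have hsqrt : Real.sqrt (pVar Plim bα) ≠ 0 := (Real.sqrt_pos.2 hVpos).ne'
  have hsq : Tendsto (fun n => Real.sqrt (empVar b x n)) atTop
      (𝓝 (Real.sqrt (pVar Plim bα))) := (Real.continuous_sqrt.tendsto _).comp hVar
  show Tendsto (fun n => empMean b x n / Real.sqrt (empVar b x n)) atTop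
    (𝓝 (pMean Plim bα / Real.sqrt (pVar Plim bα)))
  exact hMean.div hsq hsqrt
end
end

section
/- Let {X_n}_{n≥1} be a stationary process of 𝓜-valued random vectors extended to a two-sided stationary process, with invariant σ-field 𝓘. If the regular conditional distribution ℙ(X_1 ∈ · | σ(X_{−∞}^0)) has almost surely positive definite covariance matrix (equivalently, almost surely full-dimensional support), then the conditional distribution P_∞ := ℙ(X_1 ∈ · | 𝓘) also has almost surely positive definite covariance matrix. -/
open MeasureTheory Filter Topology Finset

noncomputable section

open ProbabilityTheory

/-- The invariant σ-field `𝓘 = {F : T⁻¹F = F}` of a transformation `T`. -/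
def invSigma {Ω : Type*} [MeasurableSpace Ω] (T : Ω → Ω) : MeasurableSpace Ω where
  MeasurableSet' s := MeasurableSet s ∧ T ⁻¹' s = s
  measurableSet_empty := ⟨MeasurableSet.empty, rfl⟩
  measurableSet_compl := fun s hs => ⟨hs.1.compl, by rw [Set.preimage_compl, hs.2]⟩
  measurableSet_iUnion := fun f hf =>
    ⟨MeasurableSet.iUnion fun i => (hf i).1, by
      rw [Set.preimage_iUnion]; exact Set.iUnion_congr fun i => (hf i).2⟩

/-- The σ-field `σ(X_{−∞}^0)` generated by the coordinates with indices `≤ 0` of a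
two-sided process. -/
def sigmaPast {Ω : Type*} [MeasurableSpace Ω] {m : ℕ} (X : ℤ → Ω → Em m) :
    MeasurableSpace Ω :=
  ⨆ (k : ℤ) (_ : k ≤ 0), MeasurableSpace.comap (X k) inferInstance

/-- The σ-field `σ(X_1^{n−1})` generated by `X_1, …, X_{n−1}`. -/
def sigmaUpTo {Ω : Type*} [MeasurableSpace Ω] {m : ℕ} (X : ℤ → Ω → Em m) (n : ℕ) :
    MeasurableSpace Ω :=
  ⨆ (k : ℤ) (_ : 1 ≤ k) (_ : k ≤ (n : ℤ) - 1), MeasurableSpace.comap (X k) inferInstance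

section Helpers
variable {m : ℕ}

lemma abs_coord_le (x : Em m) (i : Fin m) : |x i| ≤ ‖x‖ := by
  rw [← Real.sqrt_sq_eq_abs, EuclideanSpace.norm_eq]
  apply Real.sqrt_le_sqrt
  have h : (x i)^2 ≤ ∑ j, (x j)^2 :=
    Finset.single_le_sum (f := fun j => (x j)^2) (fun j _ => sq_nonneg _) (Finset.mem_univ i)
  simpa [sq_abs] using h

lemma measurable_coord (i : Fin m) : Measurable fun x : Em m => x i := by
  measurability

variable {M : ℝ} {Q : Measure (Em m)}

/-- integrability of functions bounded on the ball, for measures living on the ball. -/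
lemma integrable_of_bddOn [IsFiniteMeasure Q] (hQ : ∀ᵐ x ∂Q, ‖x‖ ≤ M)
    {g : Em m → ℝ} (hg : Measurable g) {C : ℝ} (h : ∀ x, ‖x‖ ≤ M → |g x| ≤ C) :
    Integrable g Q := by
  refine ⟨hg.aestronglyMeasurable, HasFiniteIntegral.of_bounded (C := C) ?_⟩
  filter_upwards [hQ] with x hx
  simpa [Real.norm_eq_abs] using h x hx

lemma integrable_coord [IsFiniteMeasure Q] (hQ : ∀ᵐ x ∂Q, ‖x‖ ≤ M) (i : Fin m) :
    Integrable (fun x => x i) Q :=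
  integrable_of_bddOn hQ (measurable_coord i) (C := M) (fun x hx => (abs_coord_le x i).trans hx)

lemma integrable_coord_mul [IsFiniteMeasure Q] (hQ : ∀ᵐ x ∂Q, ‖x‖ ≤ M) (i j : Fin m) :
    Integrable (fun x => x i * x j) Q := by
  have hM : ∀ᵐ x ∂Q, ‖x‖ ≤ max M 0 := hQ.mono fun x hx => hx.trans (le_max_left _ _)
  refine integrable_of_bddOn hM ((measurable_coord i).mul (measurable_coord j))
    (C := max M 0 * max M 0) (fun x hx => ?_)
  rw [abs_mul]
  exact mul_le_mul ((abs_coord_le x i).trans hx) ((abs_coord_le x j).trans hx)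
    (abs_nonneg _) (le_max_right M 0)

lemma covMat_entry [IsProbabilityMeasure Q] (hQ : ∀ᵐ x ∂Q, ‖x‖ ≤ M) (i j : Fin m) :
    covMat Q i j = (∫ x, x i * x j ∂Q) - meanVec Q i * meanVec Q j := by
  have h1 := integrable_coord hQ (M := M) i
  have h2 := integrable_coord hQ (M := M) j
  have h12 := integrable_coord_mul hQ (M := M) i j
  have hfe : (fun x : Em m => (x i - meanVec Q i) * (x j - meanVec Q j))
      = fun x => (x i * x j - meanVec Q i * x j - meanVec Q j * x i)
        + meanVec Q i * meanVec Q j := by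
    funext x; ring
  have hb : Integrable (fun x : Em m => meanVec Q i * x j) Q := h2.const_mul _
  have hc : Integrable (fun x : Em m => meanVec Q j * x i) Q := h1.const_mul _
  have hI3 : Integrable (fun x : Em m => x i * x j - meanVec Q i * x j) Q := h12.sub hb
  have hI4 : Integrable (fun x : Em m =>
      x i * x j - meanVec Q i * x j - meanVec Q j * x i) Q := hI3.sub hc
  show (∫ x, (x i - meanVec Q i) * (x j - meanVec Q j) ∂Q) = _
  rw [hfe, integral_add hI4 (integrable_const _), integral_sub hI3 hc,
    integral_sub h12 hb, integral_const_mul, integral_const_mul, integral_const]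
  simp only [measure_univ, ENNReal.toReal_one, probReal_univ, smul_eq_mul, one_mul]
  show _ - meanVec Q i * meanVec Q j - meanVec Q j * meanVec Q i
      + meanVec Q i * meanVec Q j = _
  ring

lemma covMat_symm (Q : Measure (Em m)) (i j : Fin m) : covMat Q i j = covMat Q j i := by
  show (∫ x, (x i - meanVec Q i) * (x j - meanVec Q j) ∂Q) = _
  exact congrArg (fun f : Em m → ℝ => ∫ x, f x ∂Q) (funext fun x => mul_comm _ _)

lemma integral_sfun [IsProbabilityMeasure Q] (hQ : ∀ᵐ x ∂Q, ‖x‖ ≤ M) (v : Fin m → ℝ) :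
    ∫ x, (∑ i, v i * x i) ∂Q = ∑ i, v i * meanVec Q i := by
  rw [integral_finset_sum _ (fun i _ => (integrable_coord hQ i).const_mul _)]
  exact Finset.sum_congr rfl fun i _ => integral_const_mul _ _

lemma integral_sfun_sq [IsProbabilityMeasure Q] (hQ : ∀ᵐ x ∂Q, ‖x‖ ≤ M) (v : Fin m → ℝ) :
    ∫ x, (∑ i, v i * x i)^2 ∂Q = ∑ i, ∑ j, (v i * v j) * ∫ x, x i * x j ∂Q := by
  have hfe : (fun x : Em m => (∑ i, v i * x i)^2)
      = fun x => ∑ i, ∑ j, (v i * v j) * (x i * x j) := by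
    funext x
    rw [sq, Finset.sum_mul_sum]
    exact Finset.sum_congr rfl fun i _ => Finset.sum_congr rfl fun j _ => by ring
  rw [hfe, integral_finset_sum _ (fun i _ => integrable_finset_sum _
    (fun j _ => (integrable_coord_mul hQ i j).const_mul _))]
  refine Finset.sum_congr rfl fun i _ => ?_
  rw [integral_finset_sum _ (fun j _ => (integrable_coord_mul hQ i j).const_mul _)]
  exact Finset.sum_congr rfl fun j _ => integral_const_mul _ _

/-- variance identity for the quadratic form. -/
lemma qf_eq [IsProbabilityMeasure Q] (hQ : ∀ᵐ x ∂Q, ‖x‖ ≤ M) (v : Fin m → ℝ) :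
    ∑ i, ∑ j, v i * covMat Q i j * v j
      = (∫ x, (∑ i, v i * x i)^2 ∂Q) - (∫ x, (∑ i, v i * x i) ∂Q)^2 := by
  rw [integral_sfun hQ v, integral_sfun_sq hQ v]
  have h1 : ∀ i j, v i * covMat Q i j * v j
      = (v i * v j) * (∫ x, x i * x j ∂Q) - (v i * meanVec Q i) * (v j * meanVec Q j) := by
    intro i j; rw [covMat_entry hQ i j]; ring
  simp_rw [h1, Finset.sum_sub_distrib, ← Finset.sum_mul_sum]
  rw [sq]

end Helpers

section More
variable {m : ℕ}

lemma sq_integral_le {α : Type*} [MeasurableSpace α] {μ : Measure α} [IsProbabilityMeasure μ]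
    {f : α → ℝ} (hf : Integrable f μ) (hf2 : Integrable (fun a => f a ^ 2) μ) :
    (∫ a, f a ∂μ)^2 ≤ ∫ a, f a ^ 2 ∂μ := by
  set c := ∫ a, f a ∂μ with hc
  have hfe : (fun a => (f a - c)^2) = fun a => f a ^ 2 - (2*c) * f a + c^2 := by funext a; ring
  have hI1 : Integrable (fun a => (2*c) * f a) μ := hf.const_mul _
  have hI2 : Integrable (fun a => f a ^ 2 - (2*c)*f a) μ := hf2.sub hI1
  have h0 : 0 ≤ ∫ a, (f a - c)^2 ∂μ := integral_nonneg fun a => sq_nonneg _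
  rw [hfe, integral_add hI2 (integrable_const _), integral_sub hf2 hI1, integral_const_mul,
    integral_const] at h0
  simp only [measure_univ, ENNReal.toReal_one, probReal_univ, smul_eq_mul, one_mul] at h0
  nlinarith [h0]

lemma posDef_of_qf {A : Matrix (Fin m) (Fin m) ℝ} (hsym : ∀ i j, A i j = A j i)
    (h : ∀ v : Fin m → ℝ, v ≠ 0 → 0 < ∑ i, ∑ j, v i * A i j * v j) : A.PosDef := by
  constructor
  · ext i j
    simp only [Matrix.conjTranspose_apply, star_trivial]
    exact hsym j i
  · intro v hv
    have h2 := h v (fun h0 => hv (Finsupp.coe_eq_zero.mp h0))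
    simpa [dotProduct, Matrix.mulVec, Finset.mul_sum, mul_assoc, Finsupp.sum_fintype] using h2

lemma qf_pos_of_posDef {A : Matrix (Fin m) (Fin m) ℝ} (h : A.PosDef)
    (v : Fin m → ℝ) (hv : v ≠ 0) : 0 < ∑ i, ∑ j, v i * A i j * v j := by
  have h2 := h.dotProduct_mulVec_pos hv
  simpa [dotProduct, Matrix.mulVec, Finset.mul_sum, mul_assoc] using h2

end More

section Tower
variable {Ω : Type*} [mΩ : MeasurableSpace Ω]

lemma invSigma_le (T : Ω → Ω) : invSigma T ≤ mΩ := fun _ hs => hs.1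

lemma sigmaPast_le {m : ℕ} (X : ℤ → Ω → Em m) (hXmeas : ∀ n, Measurable (X n)) :
    sigmaPast X ≤ mΩ :=
  iSup_le fun k => iSup_le fun _ => (hXmeas k).comap_le

theorem tower_aux
    (P : Measure Ω) [IsProbabilityMeasure P]
    (T Tinv : Ω → Ω) (hT : MeasurePreserving T P P) (hTinv : MeasurePreserving Tinv P P)
    (hinv₁ : Function.LeftInverse Tinv T) (hinv₂ : Function.RightInverse Tinv T)
    {m : ℕ} (M : ℝ) (X : ℤ → Ω → Em m) (hXmeas : ∀ n, Measurable (X n))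
    (hXnorm : ∀ n ω, ‖X n ω‖ ≤ M)
    (hshift : ∀ (n : ℤ) ω, X (n + 1) ω = X n (T ω))
    (g : Em m → ℝ) (hg : Measurable g) (C : ℝ) (hC : ∀ x, ‖x‖ ≤ M → |g x| ≤ C) :
    P[fun ω => g (X 1 ω)|invSigma T]
      =ᵐ[P] P[P[fun ω => g (X 1 ω)|sigmaPast X]|invSigma T] := by
  have hI : invSigma T ≤ mΩ := invSigma_le T
  have hF : sigmaPast X ≤ mΩ := sigmaPast_le X hXmeas
  set C' := max C 0 with hC'
  have hC'0 : (0:ℝ) ≤ C' := le_max_right _ _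
  -- shift identities
  have hXinv : ∀ (n : ℤ) ω, X n (Tinv ω) = X (n - 1) ω := by
    intro n ω
    have h := hshift (n - 1) (Tinv ω)
    rw [sub_add_cancel, hinv₂ ω] at h
    exact h
  have hXiter : ∀ (n : ℤ) (j : ℕ) ω, X n (Tinv^[j] ω) = X (n - j) ω := by
    intro n j
    induction j with
    | zero => intro ω; simp
    | succ k ih =>
      intro ω
      rw [Function.iterate_succ_apply, ih (Tinv ω), hXinv]
      congr 1
      push_cast
      ring
  set Y : Ω → ℝ := fun ω => g (X 1 ω) with hYdef
  have hYmeas : Measurable Y := hg.comp (hXmeas 1)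
  have hYbdd : ∀ ω, |Y ω| ≤ C' := fun ω => (hC _ (hXnorm 1 ω)).trans (le_max_left _ _)
  have mk_int : ∀ (f : Ω → ℝ) (c : ℝ), Measurable f → (∀ᵐ ω ∂P, |f ω| ≤ c) →
      Integrable f P := fun f c hm hb =>
    ⟨hm.aestronglyMeasurable, HasFiniteIntegral.of_bounded (C := c)
      (hb.mono fun ω h => by simpa [Real.norm_eq_abs] using h)⟩
  have hYint : Integrable Y P := mk_int Y C' hYmeas (Eventually.of_forall hYbdd)
  set Z : Ω → ℝ := P[Y|sigmaPast X] with hZdef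
  have hZsm : StronglyMeasurable[sigmaPast X] Z := stronglyMeasurable_condExp
  have hZmeas : Measurable Z := (hZsm.mono hF).measurable
  have hZint : Integrable Z P := integrable_condExp
  have hZbdd : ∀ᵐ ω ∂P, |Z ω| ≤ C' := by
    have h := ae_bdd_condExp_of_ae_bdd (m := sigmaPast X) (μ := P) (f := Y)
      (R := ⟨C', hC'0⟩) (Eventually.of_forall fun ω => hYbdd ω)
    exact h
  set D : Ω → ℝ := fun ω => Y ω - Z ω with hDdef
  have hDmeas : Measurable D := hYmeas.sub hZmeas
  have hDbdd : ∀ᵐ ω ∂P, |D ω| ≤ 2 * C' := by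
    filter_upwards [hZbdd] with ω h
    have h2 : |Y ω - Z ω| ≤ |Y ω| + |Z ω| := by
      rw [sub_eq_add_neg]
      exact (abs_add_le _ _).trans (by rw [abs_neg])
    have h3 := hYbdd ω
    calc |Y ω - Z ω| ≤ |Y ω| + |Z ω| := h2
      _ ≤ 2 * C' := by linarith
  have hDint : Integrable D P := mk_int D (2*C') hDmeas hDbdd
  have hDcond : P[D|sigmaPast X] =ᵐ[P] 0 := by
    have h1 : P[D|sigmaPast X] =ᵐ[P] P[Y|sigmaPast X] - P[Z|sigmaPast X] :=
      condExp_sub hYint hZint _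
    have h2 : P[Z|sigmaPast X] =ᵐ[P] Z := condExp_condExp_of_le le_rfl hF
    filter_upwards [h1, h2] with ω e1 e2
    simp only [Pi.sub_apply] at e1
    simp [e1, e2]
    simp [hZdef]
  have hiter : ∀ j : ℕ, MeasurePreserving (Tinv^[j]) P P := fun j => hTinv.iterate j
  have hDbdd_comp : ∀ j : ℕ, ∀ᵐ ω ∂P, |D (Tinv^[j] ω)| ≤ 2*C' := by
    intro j
    have hmeas : MeasurableSet {ω | |D ω| ≤ 2*C'} :=
      measurableSet_le hDmeas.abs measurable_const
    have h2 : ∀ᵐ y ∂(Measure.map (Tinv^[j]) P), |D y| ≤ 2*C' := by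
      rw [(hiter j).map_eq]; exact hDbdd
    exact (ae_map_iff (hiter j).measurable.aemeasurable hmeas).1 h2
  have hint_shift : ∀ (f : Ω → ℝ), Measurable f → ∀ j : ℕ,
      ∫ ω, f (Tinv^[j] ω) ∂P = ∫ ω, f ω ∂P := by
    intro f hf j
    have h := integral_map (μ := P) (φ := Tinv^[j]) (hiter j).measurable.aemeasurable
      (f := f) hf.aestronglyMeasurable
    rw [(hiter j).map_eq] at h
    exact h.symm
  -- orthogonality
  have KO : ∀ j : ℕ, 1 ≤ j → ∫ ω, D ω * D (Tinv^[j] ω) ∂P = 0 := by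
    intro j hj
    set W : Ω → ℝ := fun ω => D (Tinv^[j] ω) with hW
    have hkle : (1 : ℤ) - (j:ℤ) ≤ 0 := by
      have : (1:ℤ) ≤ (j:ℤ) := by exact_mod_cast hj
      omega
    have hXk_meas : Measurable[sigmaPast X] (X (1 - (j:ℤ))) := by
      apply Measurable.of_comap_le
      exact le_iSup₂ (f := fun (k : ℤ) (_ : k ≤ 0) =>
        MeasurableSpace.comap (X k) inferInstance) (1 - (j:ℤ)) hkle
    have hWy : Measurable[sigmaPast X] fun ω => Y (Tinv^[j] ω) := by
      have he : (fun ω => Y (Tinv^[j] ω)) = fun ω => g (X (1 - (j:ℤ)) ω) := by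
        funext ω; simp only [hYdef, hXiter 1 j ω]
      rw [he]
      exact hg.comp hXk_meas
    have hcomap_le : MeasurableSpace.comap (Tinv^[j]) (sigmaPast X) ≤ sigmaPast X := by
      rw [sigmaPast]
      simp_rw [MeasurableSpace.comap_iSup]
      apply iSup₂_le
      intro k hk
      rw [MeasurableSpace.comap_comp]
      have hXcomp : X k ∘ Tinv^[j] = X (k - (j:ℤ)) := funext fun ω => hXiter k j ω
      rw [hXcomp]
      exact le_iSup₂ (f := fun (k : ℤ) (_ : k ≤ 0) =>
        MeasurableSpace.comap (X k) inferInstance) (k - (j:ℤ)) (by omega)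
    have hWz : Measurable[sigmaPast X] fun ω => Z (Tinv^[j] ω) := by
      apply Measurable.of_comap_le
      calc MeasurableSpace.comap (fun ω => Z (Tinv^[j] ω)) inferInstance
          = MeasurableSpace.comap (Tinv^[j])
            (MeasurableSpace.comap Z inferInstance) := MeasurableSpace.comap_comp.symm
        _ ≤ MeasurableSpace.comap (Tinv^[j]) (sigmaPast X) :=
            MeasurableSpace.comap_mono hZsm.measurable.comap_le
        _ ≤ sigmaPast X := hcomap_le
    have hWsm : StronglyMeasurable[sigmaPast X] W := (hWy.sub hWz).stronglyMeasurable
    have hWmeas : Measurable W := hDmeas.comp (hiter j).measurable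
    have hWD : Integrable (fun ω => W ω * D ω) P := by
      refine mk_int _ ((2*C')*(2*C')) (hWmeas.mul hDmeas) ?_
      filter_upwards [hDbdd, hDbdd_comp j] with ω h1 h2
      rw [abs_mul]
      exact mul_le_mul h2 h1 (abs_nonneg _) (by linarith)
    have h1 : ∫ ω, W ω * D ω ∂P
        = ∫ ω, (P[fun ω => W ω * D ω|sigmaPast X]) ω ∂P := (integral_condExp hF).symm
    have h2 : P[fun ω => W ω * D ω|sigmaPast X] =ᵐ[P]
        fun ω => W ω * (P[D|sigmaPast X]) ω := by
      have h := condExp_mul_of_stronglyMeasurable_left hWsm hWD hDint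
      exact h
    have h3 : (fun ω => W ω * (P[D|sigmaPast X]) ω) =ᵐ[P] 0 := by
      filter_upwards [hDcond] with ω h
      simp [h]
    have h4 : ∫ ω, D ω * D (Tinv^[j] ω) ∂P = ∫ ω, W ω * D ω ∂P :=
      congrArg (fun f : Ω → ℝ => ∫ ω, f ω ∂P) (funext fun ω => mul_comm _ _)
    rw [h4, h1, integral_congr_ae (h2.trans h3)]
    simp
  -- the set-integral identity
  have key : ∀ F : Set Ω, MeasurableSet[invSigma T] F →
      ∫ ω in F, Y ω ∂P = ∫ ω in F, Z ω ∂P := by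
    intro F hFm
    classical
    obtain ⟨hFmeas, hFinv⟩ := hFm
    have hFmem : ∀ ω, ω ∈ F ↔ T ω ∈ F := by
      intro ω
      conv_lhs => rw [← hFinv]
      exact Iff.rfl
    have hFinvmem : ∀ ω, Tinv ω ∈ F ↔ ω ∈ F := fun ω => by
      rw [hFmem (Tinv ω), hinv₂ ω]
    have hFiter : ∀ (j : ℕ) ω, Tinv^[j] ω ∈ F ↔ ω ∈ F := by
      intro j
      induction j with
      | zero => intro ω; simp
      | succ k ih =>
        intro ω
        rw [Function.iterate_succ_apply, ih (Tinv ω), hFinvmem ω]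
    set e : Ω → ℝ := F.indicator (fun _ => (1:ℝ)) with he
    have hemeas : Measurable e := measurable_const.indicator hFmeas
    have he01 : ∀ ω, 0 ≤ e ω ∧ e ω ≤ 1 := by
      intro ω
      rw [he, Set.indicator_apply]
      split <;> norm_num
    have heabs : ∀ ω, |e ω| ≤ 1 := fun ω =>
      abs_le.2 ⟨by linarith [(he01 ω).1], (he01 ω).2⟩
    have heD : ∀ (j:ℕ) ω, e (Tinv^[j] ω) = e ω := by
      intro j ω
      simp only [he, Set.indicator_apply]
      exact if_congr (hFiter j ω) rfl rfl
    have claim1 : ∀ j : ℕ, ∫ ω, e ω * D (Tinv^[j] ω) ∂P = ∫ ω, e ω * D ω ∂P := by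
      intro j
      have h := hint_shift (fun ω => e ω * D ω) (hemeas.mul hDmeas) j
      calc ∫ ω, e ω * D (Tinv^[j] ω) ∂P
          = ∫ ω, e (Tinv^[j] ω) * D (Tinv^[j] ω) ∂P :=
            congrArg (fun f : Ω → ℝ => ∫ ω, f ω ∂P) (funext fun ω => by rw [heD])
        _ = ∫ ω, e ω * D ω ∂P := h
    set S : ℕ → Ω → ℝ := fun n ω => ∑ k ∈ Finset.range n, D (Tinv^[k] ω) with hS
    have hSmeas : ∀ n, Measurable (S n) := fun n =>
      Finset.measurable_sum _ fun k _ => hDmeas.comp (hiter k).measurable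
    have hall : ∀ᵐ ω ∂P, ∀ k : ℕ, |D (Tinv^[k] ω)| ≤ 2*C' := ae_all_iff.2 hDbdd_comp
    have hSbdd : ∀ n : ℕ, ∀ᵐ ω ∂P, |S n ω| ≤ n * (2*C') := by
      intro n
      filter_upwards [hall] with ω hω
      calc |S n ω| ≤ ∑ k ∈ Finset.range n, |D (Tinv^[k] ω)| :=
            Finset.abs_sum_le_sum_abs _ _
        _ ≤ ∑ _k ∈ Finset.range n, (2*C') := Finset.sum_le_sum fun k _ => hω k
        _ = n * (2*C') := by simp [Finset.sum_const, Finset.card_range]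
    have hSint : ∀ n : ℕ, Integrable (S n) P := fun n =>
      mk_int _ (n * (2*C')) (hSmeas n) (hSbdd n)
    have claim2 : ∀ n : ℕ, ∫ ω, e ω * S n ω ∂P = n * ∫ ω, e ω * D ω ∂P := by
      intro n
      have hfe : (fun ω => e ω * S n ω)
          = fun ω => ∑ k ∈ Finset.range n, e ω * D (Tinv^[k] ω) := by
        funext ω; rw [hS]; exact Finset.mul_sum _ _ _
      have hterm_int : ∀ k ∈ Finset.range n, Integrable (fun ω => e ω * D (Tinv^[k] ω)) P := by
        intro k _
        refine mk_int _ (1*(2*C')) (hemeas.mul (hDmeas.comp (hiter k).measurable)) ?_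
        filter_upwards [hDbdd_comp k] with ω h
        rw [abs_mul]
        exact mul_le_mul (heabs ω) h (abs_nonneg _) zero_le_one
      rw [hfe, integral_finset_sum _ hterm_int]
      simp_rw [claim1]
      simp [Finset.sum_const, Finset.card_range, nsmul_eq_mul]
    have hprod_int : ∀ k l : ℕ,
        Integrable (fun ω => D (Tinv^[k] ω) * D (Tinv^[l] ω)) P := by
      intro k l
      refine mk_int _ ((2*C')*(2*C'))
        ((hDmeas.comp (hiter k).measurable).mul (hDmeas.comp (hiter l).measurable)) ?_
      filter_upwards [hDbdd_comp k, hDbdd_comp l] with ω h1 h2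
      rw [abs_mul]
      exact mul_le_mul h1 h2 (abs_nonneg _) (by linarith)
    have claim3 : ∀ n : ℕ, ∫ ω, (S n ω)^2 ∂P = n * ∫ ω, (D ω)^2 ∂P := by
      intro n
      have hexp : (fun ω => (S n ω)^2) = fun ω => ∑ k ∈ Finset.range n,
          ∑ l ∈ Finset.range n, (D (Tinv^[k] ω) * D (Tinv^[l] ω)) := by
        funext ω; rw [sq, hS]; exact Finset.sum_mul_sum _ _ _ _
      have haux : ∀ k l : ℕ, k < l →
          ∫ ω, D (Tinv^[k] ω) * D (Tinv^[l] ω) ∂P = 0 := by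
        intro k l hkl
        have hdecomp : (fun ω => D (Tinv^[k] ω) * D (Tinv^[l] ω))
            = fun ω => (fun ω' => D ω' * D (Tinv^[l - k] ω')) (Tinv^[k] ω) := by
          funext ω
          simp only
          congr 2
          rw [← Function.iterate_add_apply]
          congr 1
          omega
        calc ∫ ω, D (Tinv^[k] ω) * D (Tinv^[l] ω) ∂P
            = ∫ ω, (fun ω' => D ω' * D (Tinv^[l - k] ω')) (Tinv^[k] ω) ∂P := by rw [hdecomp]
          _ = ∫ ω, D ω * D (Tinv^[l-k] ω) ∂P :=
              hint_shift _ (hDmeas.mul (hDmeas.comp (hiter (l-k)).measurable)) k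
          _ = 0 := KO (l - k) (by omega)
      have hterm : ∀ k l : ℕ, ∫ ω, D (Tinv^[k] ω) * D (Tinv^[l] ω) ∂P
          = if k = l then ∫ ω, (D ω)^2 ∂P else 0 := by
        intro k l
        rcases lt_trichotomy k l with h | h | h
        · rw [if_neg (Nat.ne_of_lt h), haux k l h]
        · subst h
          rw [if_pos rfl]
          have hsq : (fun ω => D (Tinv^[k] ω) * D (Tinv^[k] ω))
              = fun ω => (fun ω' => (D ω')^2) (Tinv^[k] ω) := by
            funext ω; simp [sq]
          rw [hsq, hint_shift _ (hDmeas.pow_const 2) k]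
        · rw [if_neg (Nat.ne_of_gt h)]
          have hcomm : (fun ω => D (Tinv^[k] ω) * D (Tinv^[l] ω))
              = fun ω => D (Tinv^[l] ω) * D (Tinv^[k] ω) :=
            funext fun ω => mul_comm _ _
          rw [hcomm, haux l k h]
      rw [hexp, integral_finset_sum _ (fun k _ => integrable_finset_sum _
        (fun l _ => hprod_int k l))]
      have : ∀ k ∈ Finset.range n, ∫ ω, (∑ l ∈ Finset.range n,
          D (Tinv^[k] ω) * D (Tinv^[l] ω)) ∂P = ∫ ω, (D ω)^2 ∂P := by
        intro k hk
        rw [integral_finset_sum _ (fun l _ => hprod_int k l)]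
        simp_rw [hterm]
        rw [Finset.sum_ite_eq (Finset.range n) k (fun _ => ∫ ω, (D ω)^2 ∂P), if_pos hk]
      rw [Finset.sum_congr rfl this]
      simp [Finset.sum_const, Finset.card_range]
    set a := ∫ ω, e ω * D ω ∂P with ha
    set B := ∫ ω, (D ω)^2 ∂P with hB
    have hB0 : 0 ≤ B := integral_nonneg fun ω => sq_nonneg _
    have habs : ∀ n : ℕ, 1 ≤ n → (n:ℝ) * |a| ≤ Real.sqrt ((B+1) * n) := by
      intro n hn
      have hn1 : (1:ℝ) ≤ (n:ℝ) := by exact_mod_cast hn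
      set ε := Real.sqrt ((B+1)*n) with hε
      have hεpos : 0 < ε := Real.sqrt_pos.2 (by nlinarith)
      have hεsq : ε^2 = (B+1)*(n:ℝ) := Real.sq_sqrt (by nlinarith)
      have hSsq_int : Integrable (fun ω => (S n ω)^2) P := by
        refine mk_int _ ((n*(2*C'))^2) ((hSmeas n).pow_const 2) ?_
        filter_upwards [hSbdd n] with ω h
        rw [abs_of_nonneg (sq_nonneg _)]
        have h0 : (0:ℝ) ≤ n*(2*C') := le_trans (abs_nonneg _) h
        nlinarith [sq_abs (S n ω), abs_nonneg (S n ω)]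
      have heS_int : Integrable (fun ω => |e ω * S n ω|) P := by
        refine mk_int _ ((n:ℝ)*(2*C')) ((hemeas.mul (hSmeas n)).abs) ?_
        filter_upwards [hSbdd n] with ω h
        rw [abs_abs, abs_mul]
        calc |e ω| * |S n ω| ≤ 1 * ((n:ℝ)*(2*C')) :=
              mul_le_mul (heabs ω) h (abs_nonneg _) zero_le_one
          _ = (n:ℝ)*(2*C') := one_mul _
      have hrhs_int : Integrable (fun ω => (ε^2 + (S n ω)^2)/(2*ε)) P :=
        ((integrable_const _).add hSsq_int).div_const _
      have h1 : |∫ ω, e ω * S n ω ∂P| ≤ ∫ ω, |e ω * S n ω| ∂P := by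
        have h := norm_integral_le_integral_norm (f := fun ω => e ω * S n ω) (μ := P)
        simp only [Real.norm_eq_abs] at h
        exact h
      have h2 : ∀ ω, |e ω * S n ω| ≤ (ε^2 + (S n ω)^2)/(2*ε) := by
        intro ω
        rw [abs_mul, le_div_iff₀ (by positivity)]
        nlinarith [sq_nonneg (|S n ω| - ε), sq_abs (S n ω),
          mul_nonneg (mul_nonneg (sub_nonneg.2 (heabs ω)) (abs_nonneg (S n ω))) hεpos.le]
      have h5 : ∫ ω, |e ω * S n ω| ∂P ≤ ∫ ω, (ε^2 + (S n ω)^2)/(2*ε) ∂P :=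
        integral_mono heS_int hrhs_int h2
      have h6 : ∫ ω, (ε^2 + (S n ω)^2)/(2*ε) ∂P = (ε^2 + n*B)/(2*ε) := by
        rw [integral_div]
        congr 1
        rw [integral_add (integrable_const _) hSsq_int, integral_const, claim3 n]
        simp [measure_univ]
      have h7 : (ε^2 + n*B)/(2*ε) ≤ ε := by
        rw [div_le_iff₀ (by positivity)]
        nlinarith [hεsq]
      have h8 : ∫ ω, e ω * S n ω ∂P = n * a := claim2 n
      calc (n:ℝ) * |a| = |(n:ℝ) * a| := by
            rw [abs_mul, abs_of_nonneg (by positivity : (0:ℝ) ≤ (n:ℝ))]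
        _ = |∫ ω, e ω * S n ω ∂P| := by rw [h8]
        _ ≤ ∫ ω, |e ω * S n ω| ∂P := h1
        _ ≤ (ε^2 + n*B)/(2*ε) := le_trans h5 (le_of_eq h6)
        _ ≤ ε := h7
    have ha0 : a = 0 := by
      by_contra hne
      have hapos : 0 < |a| := abs_pos.2 hne
      obtain ⟨n, hn⟩ := exists_nat_gt (max 1 ((B+1)/(|a|^2)))
      have hn1 : 1 ≤ n := by
        have h1 : (1:ℝ) < n := lt_of_le_of_lt (le_max_left _ _) hn
        exact_mod_cast h1.le
      have hnR : (0:ℝ) < n := by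
        have h : (1:ℝ) ≤ (n:ℝ) := by exact_mod_cast hn1
        linarith
      have hlt : (B+1) < n * |a|^2 := by
        have h2 : (B+1)/(|a|^2) < n := lt_of_le_of_lt (le_max_right _ _) hn
        rw [div_lt_iff₀ (by positivity)] at h2
        linarith
      have h9 := habs n hn1
      have h10 : Real.sqrt ((B+1)*n) < (n:ℝ) * |a| := by
        rw [show (n:ℝ)*|a| = Real.sqrt (((n:ℝ)*|a|)^2) from
          (Real.sqrt_sq (by positivity)).symm]
        apply Real.sqrt_lt_sqrt (by nlinarith)
        nlinarith
      linarith
    have hfe : (fun ω => e ω * D ω) = F.indicator D := by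
      funext ω
      by_cases hω : ω ∈ F <;>
        simp [he, Set.indicator_of_mem, Set.indicator_of_notMem, hω]
    have haF : ∫ ω in F, D ω ∂P = a := by
      rw [ha, hfe, integral_indicator hFmeas]
    have hsub : ∫ ω in F, Y ω ∂P - ∫ ω in F, Z ω ∂P = ∫ ω in F, D ω ∂P := by
      rw [← integral_sub hYint.integrableOn hZint.integrableOn]
    linarith [hsub, haF, ha0]
  -- assemble via the characterization of conditional expectation
  have hmain := ae_eq_condExp_of_forall_setIntegral_eq (μ := P) hI hYint
    (fun s _ _ => (integrable_condExp (f := Z) (m := invSigma T)).integrableOn)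
    (fun s hs _ => by
      rw [setIntegral_condExp hI hZint hs]
      exact (key s hs).symm)
    ((stronglyMeasurable_condExp (m := invSigma T) (μ := P) (f := Z)).aestronglyMeasurable)
  exact hmain.symm

end Tower

/-- positive definiteness of the covariance matrix of a mixture of measures whose
covariance matrices are a.e. positive definite. -/
lemma qf_mix_pos {Ω : Type*} [MeasurableSpace Ω] (κ : Measure Ω) [IsProbabilityMeasure κ]
    {m : ℕ} {M : ℝ} (hM : 0 ≤ M)
    (ν : Measure (Em m)) [IsProbabilityMeasure ν] (hν : ∀ᵐ x ∂ν, ‖x‖ ≤ M)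
    (Q : Ω → Measure (Em m)) (hQp : ∀ η, IsProbabilityMeasure (Q η))
    (hQb : ∀ η, ∀ᵐ x ∂(Q η), ‖x‖ ≤ M)
    (hGm_meas : ∀ i : Fin m, Measurable fun η => ∫ x, x i ∂(Q η))
    (hGp_meas : ∀ i j : Fin m, Measurable fun η => ∫ x, x i * x j ∂(Q η))
    (hmean : ∀ i, ∫ x, x i ∂ν = ∫ η, (∫ x, x i ∂(Q η)) ∂κ)
    (hij : ∀ i j, ∫ x, x i * x j ∂ν = ∫ η, (∫ x, x i * x j ∂(Q η)) ∂κ)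
    (hpd : ∀ᵐ η ∂κ, (covMat (Q η)).PosDef) :
    (covMat ν).PosDef := by
  have mk_int2 : ∀ (f : Ω → ℝ) (c : ℝ), Measurable f → (∀ η, |f η| ≤ c) →
      Integrable f κ := fun f c hfm hfb =>
    ⟨hfm.aestronglyMeasurable, HasFiniteIntegral.of_bounded (C := c)
      (Eventually.of_forall fun η => by simpa [Real.norm_eq_abs] using hfb η)⟩
  have hGm_bdd : ∀ (i : Fin m) η, |∫ x, x i ∂(Q η)| ≤ M := by
    intro i η
    haveI := hQp η
    have h := norm_integral_le_of_norm_le_const (μ := Q η) (f := fun x => x i) (C := M)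
      ((hQb η).mono fun x hx => by
        simpa [Real.norm_eq_abs] using (abs_coord_le x i).trans hx)
    simpa [Real.norm_eq_abs, measure_univ] using h
  have hGp_bdd : ∀ (i j : Fin m) η, |∫ x, x i * x j ∂(Q η)| ≤ M * M := by
    intro i j η
    haveI := hQp η
    have h := norm_integral_le_of_norm_le_const (μ := Q η) (f := fun x => x i * x j)
      (C := M * M) ((hQb η).mono fun x hx => by
        rw [Real.norm_eq_abs, abs_mul]
        exact mul_le_mul ((abs_coord_le x i).trans hx) ((abs_coord_le x j).trans hx)
          (abs_nonneg _) hM)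
    simpa [Real.norm_eq_abs, measure_univ] using h
  refine posDef_of_qf (covMat_symm ν) ?_
  intro v hv
  rw [qf_eq hν v]
  set φ : Ω → ℝ := fun η => ∫ x, (∑ i, v i * x i) ∂(Q η) with hφ
  set ψ : Ω → ℝ := fun η => ∫ x, (∑ i, v i * x i)^2 ∂(Q η) with hψ
  have hφe : ∀ η, φ η = ∑ i, v i * ∫ x, x i ∂(Q η) := by
    intro η
    haveI := hQp η
    exact integral_sfun (hQb η) v
  have hψe : ∀ η, ψ η = ∑ i, ∑ j, (v i * v j) * ∫ x, x i * x j ∂(Q η) := by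
    intro η
    haveI := hQp η
    exact integral_sfun_sq (hQb η) v
  have hφmeas : Measurable φ := by
    have h : φ = fun η => ∑ i, v i * ∫ x, x i ∂(Q η) := funext hφe
    rw [h]
    exact Finset.measurable_sum _ fun i _ => (hGm_meas i).const_mul _
  have hψmeas : Measurable ψ := by
    have h : ψ = fun η => ∑ i, ∑ j, (v i * v j) * ∫ x, x i * x j ∂(Q η) := funext hψe
    rw [h]
    exact Finset.measurable_sum _ fun i _ =>
      Finset.measurable_sum _ fun j _ => (hGp_meas i j).const_mul _
  have hφ_bdd : ∀ η, |φ η| ≤ ∑ i, |v i| * M := by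
    intro η
    rw [hφe η]
    refine (Finset.abs_sum_le_sum_abs _ _).trans (Finset.sum_le_sum fun i _ => ?_)
    rw [abs_mul]
    exact mul_le_mul_of_nonneg_left (hGm_bdd i η) (abs_nonneg _)
  have hψ_bdd : ∀ η, |ψ η| ≤ ∑ i, ∑ j, |v i * v j| * (M * M) := by
    intro η
    rw [hψe η]
    refine (Finset.abs_sum_le_sum_abs _ _).trans (Finset.sum_le_sum fun i _ => ?_)
    refine (Finset.abs_sum_le_sum_abs _ _).trans (Finset.sum_le_sum fun j _ => ?_)
    rw [abs_mul]
    exact mul_le_mul_of_nonneg_left (hGp_bdd i j η) (abs_nonneg _)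
  have hφint : Integrable φ κ := mk_int2 φ _ hφmeas hφ_bdd
  have hψint : Integrable ψ κ := mk_int2 ψ _ hψmeas hψ_bdd
  have hφsqint : Integrable (fun η => φ η ^ 2) κ := by
    refine mk_int2 _ ((∑ i, |v i| * M)^2) (hφmeas.pow_const 2) (fun η => ?_)
    rw [abs_of_nonneg (sq_nonneg _)]
    have h := hφ_bdd η
    have h0 : 0 ≤ ∑ i, |v i| * M := le_trans (abs_nonneg _) h
    nlinarith [sq_abs (φ η), abs_nonneg (φ η)]
  have h1 : ∫ x, (∑ i, v i * x i) ∂ν = ∫ η, φ η ∂κ := by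
    rw [integral_sfun hν v]
    calc ∑ i, v i * meanVec ν i
        = ∑ i, v i * ∫ η, (∫ x, x i ∂(Q η)) ∂κ :=
          Finset.sum_congr rfl fun i _ => by
            rw [show meanVec ν i = ∫ x, x i ∂ν from rfl, hmean i]
      _ = ∑ i, ∫ η, v i * ∫ x, x i ∂(Q η) ∂κ :=
          Finset.sum_congr rfl fun i _ => (integral_const_mul _ _).symm
      _ = ∫ η, ∑ i, v i * ∫ x, x i ∂(Q η) ∂κ :=
          (integral_finset_sum _ fun i _ => mk_int2 _ (|v i| * M)
            ((hGm_meas i).const_mul _) (fun η => by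
              rw [abs_mul]
              exact mul_le_mul_of_nonneg_left (hGm_bdd i η) (abs_nonneg _))).symm
      _ = ∫ η, φ η ∂κ := congrArg (fun f : Ω → ℝ => ∫ η, f η ∂κ)
            (funext fun η => (hφe η).symm)
  have h2 : ∫ x, (∑ i, v i * x i)^2 ∂ν = ∫ η, ψ η ∂κ := by
    rw [integral_sfun_sq hν v]
    calc ∑ i, ∑ j, (v i * v j) * ∫ x, x i * x j ∂ν
        = ∑ i, ∑ j, (v i * v j) * ∫ η, (∫ x, x i * x j ∂(Q η)) ∂κ :=
          Finset.sum_congr rfl fun i _ => Finset.sum_congr rfl fun j _ => by rw [hij i j]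
      _ = ∑ i, ∑ j, ∫ η, (v i * v j) * ∫ x, x i * x j ∂(Q η) ∂κ :=
          Finset.sum_congr rfl fun i _ => Finset.sum_congr rfl fun j _ =>
            (integral_const_mul _ _).symm
      _ = ∑ i, ∫ η, ∑ j, (v i * v j) * ∫ x, x i * x j ∂(Q η) ∂κ :=
          Finset.sum_congr rfl fun i _ =>
            (integral_finset_sum _ fun j _ => mk_int2 _ (|v i * v j| * (M*M))
              ((hGp_meas i j).const_mul _) (fun η => by
                rw [abs_mul]
                exact mul_le_mul_of_nonneg_left (hGp_bdd i j η) (abs_nonneg _))).symm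
      _ = ∫ η, ∑ i, ∑ j, (v i * v j) * ∫ x, x i * x j ∂(Q η) ∂κ :=
          (integral_finset_sum _ fun i _ => integrable_finset_sum _ fun j _ =>
            mk_int2 _ (|v i * v j| * (M*M)) ((hGp_meas i j).const_mul _) (fun η => by
              rw [abs_mul]
              exact mul_le_mul_of_nonneg_left (hGp_bdd i j η) (abs_nonneg _))).symm
      _ = ∫ η, ψ η ∂κ := congrArg (fun f : Ω → ℝ => ∫ η, f η ∂κ)
            (funext fun η => (hψe η).symm)
  rw [h1, h2]
  have hqfη : ∀ᵐ η ∂κ, 0 < ψ η - φ η ^ 2 := by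
    filter_upwards [hpd] with η hη
    haveI := hQp η
    have hq := qf_pos_of_posDef hη v hv
    have he := qf_eq (hQb η) v
    simp only [hψ, hφ]
    linarith [hq, he]
  have hnonneg : 0 ≤ᵐ[κ] fun η => ψ η - φ η ^ 2 := hqfη.mono fun η h => h.le
  have hsubint : Integrable (fun η => ψ η - φ η ^ 2) κ := hψint.sub hφsqint
  have hpos : 0 < ∫ η, (ψ η - φ η ^ 2) ∂κ := by
    rw [integral_pos_iff_support_of_nonneg_ae hnonneg hsubint]
    have hc : κ (Function.support fun η => ψ η - φ η ^ 2)ᶜ = 0 := by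
      refine measure_mono_null ?_ (ae_iff.1 hqfη)
      intro η hη
      simp only [Set.mem_compl_iff, Function.mem_support, not_not] at hη
      show ¬ (0 < ψ η - φ η ^ 2)
      rw [hη]
      exact lt_irrefl 0
    have hun : (1 : ENNReal) ≤ κ (Function.support fun η => ψ η - φ η ^ 2)
        + κ (Function.support fun η => ψ η - φ η ^ 2)ᶜ := by
      calc (1 : ENNReal) = κ Set.univ := measure_univ.symm
        _ = κ ((Function.support fun η => ψ η - φ η ^ 2)
            ∪ (Function.support fun η => ψ η - φ η ^ 2)ᶜ) := by
            rw [Set.union_compl_self]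
        _ ≤ κ (Function.support fun η => ψ η - φ η ^ 2)
            + κ (Function.support fun η => ψ η - φ η ^ 2)ᶜ := measure_union_le _ _
    rw [hc, add_zero] at hun
    exact lt_of_lt_of_le (by norm_num) hun
  have hvar : (∫ η, φ η ∂κ)^2 ≤ ∫ η, φ η ^ 2 ∂κ := sq_integral_le hφint hφsqint
  have hsplit : ∫ η, (ψ η - φ η ^ 2) ∂κ = ∫ η, ψ η ∂κ - ∫ η, φ η ^ 2 ∂κ :=
    integral_sub hψint hφsqint
  linarith

/-- For a stationary process extended to a two-sided stationary process with
invertible measure-preserving shift `T` and invariant σ-field `𝓘`, if the regular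
conditional distribution `ℙ(X_1 ∈ · | σ(X_{−∞}^0))` has a.s. positive definite covariance
matrix, then so does `P_∞ = ℙ(X_1 ∈ · | 𝓘)`. -/
theorem limit_empirical_distribution_posDef_covariance
    (m : ℕ) (hm : 2 ≤ m) (M : ℝ) (hM : 0 < M)
    {Ω : Type*} [MeasurableSpace Ω] [StandardBorelSpace Ω] [Nonempty Ω]
    (P : Measure Ω) [IsProbabilityMeasure P]
    (T Tinv : Ω → Ω) (hT : MeasurePreserving T P P) (hTinv : MeasurePreserving Tinv P P)
    (hinv₁ : Function.LeftInverse Tinv T) (hinv₂ : Function.RightInverse Tinv T)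
    (X : ℤ → Ω → Em m) (hXmeas : ∀ n, Measurable (X n))
    (hXmem : ∀ n ω, X n ω ∈ mkt m M)
    (hshift : ∀ (n : ℤ) ω, X (n + 1) ω = X n (T ω))
    (hPD : ∀ᵐ ω ∂P,
      (covMat (Measure.map (X 1) (condExpKernel P (sigmaPast X) ω))).PosDef) :
    ∀ᵐ ω ∂P,
      (covMat (Measure.map (X 1) (condExpKernel P (invSigma T) ω))).PosDef := by
  have hI : invSigma T ≤ ‹MeasurableSpace Ω› := invSigma_le T
  have hF : sigmaPast X ≤ ‹MeasurableSpace Ω› := sigmaPast_le X hXmeas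
  have hXnorm : ∀ (n : ℤ) ω, ‖X n ω‖ ≤ M := fun n ω => (hXmem n ω).2
  have msetball : MeasurableSet {x : Em m | ‖x‖ ≤ M} :=
    measurableSet_le measurable_norm measurable_const
  have hmapbdd : ∀ ν : Measure Ω, ∀ᵐ x ∂(Measure.map (X 1) ν), ‖x‖ ≤ M := by
    intro ν
    rw [ae_map_iff (hXmeas 1).aemeasurable msetball]
    exact Eventually.of_forall fun ω => hXnorm 1 ω
  have hmapint : ∀ (g : Em m → ℝ), Measurable g → ∀ ν : Measure Ω,
      ∫ x, g x ∂(Measure.map (X 1) ν) = ∫ ω', g (X 1 ω') ∂ν :=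
    fun g hg ν => integral_map (hXmeas 1).aemeasurable hg.aestronglyMeasurable
  have hFprob : ∀ η, IsProbabilityMeasure
      (Measure.map (X 1) (condExpKernel P (sigmaPast X) η)) := by
    intro η
    haveI : IsProbabilityMeasure (condExpKernel P (sigmaPast X) η) :=
      IsMarkovKernel.isProbabilityMeasure η
    exact Measure.isProbabilityMeasure_map (hXmeas 1).aemeasurable
  have kermeas : ∀ (g : Em m → ℝ), Measurable g →
      Measurable fun η => ∫ x, g x ∂(Measure.map (X 1) (condExpKernel P (sigmaPast X) η)) := by
    intro g hg
    have h0 : (fun η => ∫ x, g x ∂(Measure.map (X 1) (condExpKernel P (sigmaPast X) η)))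
        = fun η => ∫ ω', g (X 1 ω') ∂(condExpKernel P (sigmaPast X) η) :=
      funext fun η => hmapint g hg _
    rw [h0]
    have hsm := MeasureTheory.StronglyMeasurable.integral_kernel_prod_right
      (κ := condExpKernel P (sigmaPast X)) (f := fun _ b => g (X 1 b))
      ((hg.comp ((hXmeas 1).comp measurable_snd)).stronglyMeasurable)
    exact (hsm.mono hF).measurable
  -- the tower identity transported to the conditional kernels
  have main_id : ∀ (g : Em m → ℝ), Measurable g → ∀ C : ℝ, (∀ x, ‖x‖ ≤ M → |g x| ≤ C) →
      ∀ᵐ ω ∂P, ∫ x, g x ∂(Measure.map (X 1) (condExpKernel P (invSigma T) ω))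
        = ∫ η, (∫ x, g x ∂(Measure.map (X 1) (condExpKernel P (sigmaPast X) η)))
            ∂(condExpKernel P (invSigma T) ω) := by
    intro g hg C hC
    have hYgmeas : Measurable fun ω => g (X 1 ω) := hg.comp (hXmeas 1)
    have hYgbdd : ∀ ω, |g (X 1 ω)| ≤ max C 0 := fun ω =>
      (hC _ (hXnorm 1 ω)).trans (le_max_left _ _)
    have hYgint : Integrable (fun ω => g (X 1 ω)) P :=
      ⟨hYgmeas.aestronglyMeasurable, HasFiniteIntegral.of_bounded (C := max C 0)
        (Eventually.of_forall fun ω => by simpa [Real.norm_eq_abs] using hYgbdd ω)⟩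
    set GF : Ω → ℝ :=
      fun η => ∫ x, g x ∂(Measure.map (X 1) (condExpKernel P (sigmaPast X) η)) with hGFdef
    have hGFmeas : Measurable GF := kermeas g hg
    have hGFbdd : ∀ η, |GF η| ≤ max C 0 := by
      intro η
      haveI := hFprob η
      have h := norm_integral_le_of_norm_le_const
        (μ := Measure.map (X 1) (condExpKernel P (sigmaPast X) η)) (f := g) (C := max C 0)
        ((hmapbdd (condExpKernel P (sigmaPast X) η)).mono fun x hx => by
          rw [Real.norm_eq_abs]
          exact (hC x hx).trans (le_max_left _ _))
      simpa [Real.norm_eq_abs, measure_univ] using h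
    have hGFint : Integrable GF P := ⟨hGFmeas.aestronglyMeasurable,
      HasFiniteIntegral.of_bounded (C := max C 0)
        (Eventually.of_forall fun η => by simpa [Real.norm_eq_abs] using hGFbdd η)⟩
    have e1 : P[fun ω => g (X 1 ω)|invSigma T] =ᵐ[P]
        fun ω => ∫ ω', g (X 1 ω') ∂(condExpKernel P (invSigma T) ω) :=
      condExp_ae_eq_integral_condExpKernel hI hYgint
    have e2 : P[fun ω => g (X 1 ω)|sigmaPast X] =ᵐ[P] GF := by
      refine (condExp_ae_eq_integral_condExpKernel hF hYgint).trans ?_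
      exact Eventually.of_forall fun η => (hmapint g hg _).symm
    have e3 := tower_aux P T Tinv hT hTinv hinv₁ hinv₂ M X hXmeas hXnorm hshift g hg C hC
    have e4 : P[P[fun ω => g (X 1 ω)|sigmaPast X]|invSigma T] =ᵐ[P] P[GF|invSigma T] :=
      condExp_congr_ae e2
    have e5 : P[GF|invSigma T] =ᵐ[P]
        fun ω => ∫ η, GF η ∂(condExpKernel P (invSigma T) ω) :=
      condExp_ae_eq_integral_condExpKernel hI hGFint
    filter_upwards [e1, e3, e4, e5] with ω h1 h3 h4 h5
    calc ∫ x, g x ∂(Measure.map (X 1) (condExpKernel P (invSigma T) ω))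
        = ∫ ω', g (X 1 ω') ∂(condExpKernel P (invSigma T) ω) := hmapint g hg _
      _ = (P[fun ω => g (X 1 ω)|invSigma T]) ω := h1.symm
      _ = (P[P[fun ω => g (X 1 ω)|sigmaPast X]|invSigma T]) ω := h3
      _ = (P[GF|invSigma T]) ω := h4
      _ = ∫ η, GF η ∂(condExpKernel P (invSigma T) ω) := h5
  -- the a.e. positive definiteness transfers to the kernel of the invariant σ-field
  have hPDk : ∀ᵐ ω ∂P, ∀ᵐ η ∂(condExpKernel P (invSigma T) ω),
      (covMat (Measure.map (X 1) (condExpKernel P (sigmaPast X) η))).PosDef := by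
    set N := {η | ¬ (covMat (Measure.map (X 1) (condExpKernel P (sigmaPast X) η))).PosDef}
      with hN
    have hPN : P (toMeasurable P N) = 0 := by
      rw [measure_toMeasurable]
      exact ae_iff.1 hPD
    have hmeasN : MeasurableSet (toMeasurable P N) := measurableSet_toMeasurable _ _
    have h1 : (fun ω => (condExpKernel P (invSigma T) ω (toMeasurable P N)).toReal)
        =ᵐ[P] P⟦toMeasurable P N|invSigma T⟧ := condExpKernel_ae_eq_condExp hI hmeasN
    have h2 : P⟦toMeasurable P N|invSigma T⟧ =ᵐ[P] 0 := by
      have hind : (toMeasurable P N).indicator (fun _ => (1:ℝ)) =ᵐ[P] 0 := by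
        have hnm : ∀ᵐ ω ∂P, ω ∉ toMeasurable P N := by
          rw [ae_iff]
          simpa using hPN
        filter_upwards [hnm] with ω h
        simp [Set.indicator_of_notMem, h]
      exact (condExp_congr_ae hind).trans (by rw [condExp_zero])
    filter_upwards [h1.trans h2] with ω hω
    have h3 : condExpKernel P (invSigma T) ω (toMeasurable P N) = 0 := by
      haveI : IsProbabilityMeasure (condExpKernel P (invSigma T) ω) :=
        IsMarkovKernel.isProbabilityMeasure ω
      have hne := measure_ne_top (condExpKernel P (invSigma T) ω) (toMeasurable P N)
      simp only [Pi.zero_apply] at hω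
      exact (ENNReal.toReal_eq_zero_iff _).1 hω |>.resolve_right hne
    have h4 : condExpKernel P (invSigma T) ω N = 0 :=
      measure_mono_null (subset_toMeasurable _ _) h3
    rw [ae_iff]
    exact h4
  -- the coordinate identities
  have hIJ : ∀ᵐ ω ∂P, ∀ i j : Fin m,
      ∫ x, x i * x j ∂(Measure.map (X 1) (condExpKernel P (invSigma T) ω))
        = ∫ η, (∫ x, x i * x j ∂(Measure.map (X 1) (condExpKernel P (sigmaPast X) η)))
            ∂(condExpKernel P (invSigma T) ω) :=
    ae_all_iff.2 fun i => ae_all_iff.2 fun j =>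
      main_id _ ((measurable_coord i).mul (measurable_coord j)) (M*M) (fun x hx => by
        rw [abs_mul]
        exact mul_le_mul ((abs_coord_le x i).trans hx) ((abs_coord_le x j).trans hx)
          (abs_nonneg _) hM.le)
  have hIm : ∀ᵐ ω ∂P, ∀ i : Fin m,
      ∫ x, x i ∂(Measure.map (X 1) (condExpKernel P (invSigma T) ω))
        = ∫ η, (∫ x, x i ∂(Measure.map (X 1) (condExpKernel P (sigmaPast X) η)))
            ∂(condExpKernel P (invSigma T) ω) :=
    ae_all_iff.2 fun i =>
      main_id _ (measurable_coord i) M (fun x hx => (abs_coord_le x i).trans hx)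
  -- conclude pointwise
  filter_upwards [hIJ, hIm, hPDk] with ω hij hmean hpd
  haveI : IsProbabilityMeasure (condExpKernel P (invSigma T) ω) :=
    IsMarkovKernel.isProbabilityMeasure ω
  haveI : IsProbabilityMeasure
      (Measure.map (X 1) (condExpKernel P (invSigma T) ω)) :=
    Measure.isProbabilityMeasure_map (hXmeas 1).aemeasurable
  exact qf_mix_pos (condExpKernel P (invSigma T) ω) hM.le
    (Measure.map (X 1) (condExpKernel P (invSigma T) ω)) (hmapbdd _)
    (fun η => Measure.map (X 1) (condExpKernel P (sigmaPast X) η)) hFprob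
    (fun η => hmapbdd _)
    (fun i => kermeas _ (measurable_coord i))
    (fun i j => kermeas _ ((measurable_coord i).mul (measurable_coord j)))
    hmean hij hpd
end
end
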